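/- arXiv:2309.03117 — 6 statements merged into one kernel-verified Lean document; each statement's English description precedes it below -/
import Mathlib

section
/- Let n ≥ 2 and let w ∈ S_n ⊆ Ŝ_n (so w is a bijection of ℤ with w(k+n) = w(k)+n mapping {1,…,n} to itself). Then the map (i,j) ↦ (i, j + (j−i)·n) is a bijection from the inversion set Inv(w) onto the set Inv₀(γ⁻¹wγ) of vanishing inversions of γ⁻¹wγ. -/
/-!
Statement 0: For `w` in the finite symmetric group `S_n ⊆ Ŝ_n`, the map
`(i,j) ↦ (i, j + (j−i)·n)` is a bijection from `Inv(w)` onto the set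
`Inv₀(γ⁻¹wγ)` of vanishing inversions of `γ⁻¹wγ`.

Here `Ŝ_n` is realized as the group of bijections `u : ℤ → ℤ` with
`u(k+n) = u(k)+n`, `S_n` is the subgroup of those mapping `{1,…,n}` to itself,
and `γ(k) = k − n·((k−1) mod n)`, with inverse `γ⁻¹(m) = m + n·((m−1) mod n)`.
-/

/-- The element γ of the extended affine symmetric group: `γ(k) = k − n·((k−1) mod n)`. -/
def gam (n : ℕ) (k : ℤ) : ℤ := k - n * ((k - 1) % (n : ℤ))

/-- The inverse of γ: `γ⁻¹(m) = m + n·((m−1) mod n)`. -/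
def gamInv (n : ℕ) (m : ℤ) : ℤ := m + n * ((m - 1) % (n : ℤ))

/-- The inversion set of a function `u : ℤ → ℤ`:
pairs `(i,j)` with `1 ≤ i ≤ n`, `i < j` and `u(i) > u(j)`. -/
def InvSet (n : ℕ) (u : ℤ → ℤ) : Set (ℤ × ℤ) :=
  {p | 1 ≤ p.1 ∧ p.1 ≤ (n : ℤ) ∧ p.1 < p.2 ∧ u p.2 < u p.1}

/-- The vanishing inversions: inversions `(i,j)` with `j − i ≡ 0 mod (n+1)`. -/
def InvSet0 (n : ℕ) (u : ℤ → ℤ) : Set (ℤ × ℤ) :=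
  {p ∈ InvSet n u | ((n : ℤ) + 1) ∣ (p.2 - p.1)}

lemma w_shift (n : ℕ) (w : Equiv.Perm ℤ)
    (hper : ∀ k : ℤ, w (k + n) = w k + n) :
    ∀ (t m : ℤ), w (m + t * n) = w m + t * n := by
  intro t
  induction t using Int.induction_on with
  | zero => simp
  | succ t ih =>
      intro m
      have h1 : m + (t + 1 : ℤ) * n = (m + t * n) + n := by ring
      rw [h1, hper, ih]; ring
  | pred t ih =>
      intro m
      have key := hper (m + (-(t:ℤ)-1) * n)
      have e : m + (-(t:ℤ)-1) * n + n = m + (-t:ℤ) * n := by ring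
      rw [e, ih] at key
      linear_combination -key

lemma u_val (n : ℕ) (hn : 1 ≤ n) (w : Equiv.Perm ℤ)
    (hper : ∀ k : ℤ, w (k + n) = w k + n)
    (hfin : ∀ k : ℤ, 1 ≤ k → k ≤ n → 1 ≤ w k ∧ w k ≤ n) (k : ℤ) :
    (gamInv n ∘ ⇑w ∘ gam n) k
      = w ((k-1) % n + 1) + n * ((k-1)/n - (k-1)%n + w ((k-1)%n + 1) - 1) := by
  have hn0 : (0 : ℤ) < n := by exact_mod_cast hn
  set r0 := (k-1) % (n:ℤ) with hr0
  set q := (k-1) / (n:ℤ) with hq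
  have hr0lb : 0 ≤ r0 := Int.emod_nonneg _ (by omega)
  have hr0ub : r0 < n := Int.emod_lt_of_pos _ hn0
  have hme := Int.emod_add_mul_ediv (k-1) (n:ℤ)
  rw [← hr0, ← hq] at hme
  have hk : k = r0 + 1 + q * n := by linear_combination -hme
  have hw := hfin (r0 + 1) (by omega) (by omega)
  have hg : gam n k = (r0 + 1) + (q - r0) * n := by
    simp only [gam, ← hr0]; linear_combination hk
  have hwg : w (gam n k) = w (r0 + 1) + (q - r0) * n := by
    rw [hg, w_shift n w hper]
  have hmod : (w (r0 + 1) + (q - r0) * n - 1) % n = w (r0 + 1) - 1 := by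
    have h : w (r0 + 1) + (q - r0) * n - 1 = (w (r0 + 1) - 1) + (q - r0) * n := by ring
    rw [h, Int.add_mul_emod_self_right, Int.emod_eq_of_lt (by omega) (by omega)]
  simp only [Function.comp_apply, gamInv, hwg, hmod, ← hr0, ← hq]
  ring

lemma key (n : ℕ) (hn : 1 ≤ n) (w : Equiv.Perm ℤ)
    (hper : ∀ k : ℤ, w (k + n) = w k + n)
    (hfin : ∀ k : ℤ, 1 ≤ k → k ≤ n → 1 ≤ w k ∧ w k ≤ n)
    (i j : ℤ) (hi1 : 1 ≤ i) (hi2 : i ≤ n) :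
    (gamInv n ∘ ⇑w ∘ gam n) i - (gamInv n ∘ ⇑w ∘ gam n) (j + (j - i) * n)
      = (n + 1) * (w i - w j) := by
  have hn0 : (0 : ℤ) < n := by exact_mod_cast hn
  have hie : (i - 1) % (n:ℤ) = i - 1 := Int.emod_eq_of_lt (by omega) (by omega)
  have hid : (i - 1) / (n:ℤ) = 0 := Int.ediv_eq_zero_of_lt (by omega) (by omega)
  have hui : (gamInv n ∘ ⇑w ∘ gam n) i = w i + n * (w i - i) := by
    rw [u_val n hn w hper hfin i, hie, hid]
    ring_nf
  set r0 := (j-1) % (n:ℤ) with hr0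
  set q := (j-1) / (n:ℤ) with hq
  have hme := Int.emod_add_mul_ediv (j-1) (n:ℤ)
  rw [← hr0, ← hq] at hme
  have hjr : j - 1 = r0 + q * n := by linear_combination -hme
  have hje : (j + (j - i) * n - 1) % (n:ℤ) = r0 := by
    have h : j + (j - i) * n - 1 = (j - 1) + (j - i) * n := by ring
    rw [h, Int.add_mul_emod_self_right, ← hr0]
  have hjd : (j + (j - i) * n - 1) / (n:ℤ) = q + (j - i) := by
    have h : j + (j - i) * n - 1 = (j - 1) + (j - i) * n := by ring
    rw [h, Int.add_mul_ediv_right _ _ (by omega : (n:ℤ) ≠ 0), ← hq]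
  have huj : (gamInv n ∘ ⇑w ∘ gam n) (j + (j - i) * n)
      = w (r0 + 1) + n * (q + (j - i) - r0 + w (r0 + 1) - 1) := by
    rw [u_val n hn w hper hfin _, hje, hjd]
  have hwj : w j = w (r0 + 1) + q * n := by
    have hj : j = r0 + 1 + q * n := by omega
    conv_lhs => rw [hj]
    rw [w_shift n w hper]
  rw [hui, huj, hwj]
  linear_combination -(n:ℤ) * hjr

theorem statement0 (n : ℕ) (hn : 2 ≤ n) (w : Equiv.Perm ℤ)
    (hper : ∀ k : ℤ, w (k + n) = w k + n)
    (hfin : ∀ k : ℤ, 1 ≤ k → k ≤ n → 1 ≤ w k ∧ w k ≤ n) :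
    Set.BijOn (fun p : ℤ × ℤ => (p.1, p.2 + (p.2 - p.1) * n))
      (InvSet n ⇑w) (InvSet0 n (gamInv n ∘ ⇑w ∘ gam n)) := by
  have hn1 : 1 ≤ n := by omega
  have hn0 : (0 : ℤ) < n := by exact_mod_cast hn1
  refine ⟨?_, ?_, ?_⟩
  · -- MapsTo
    rintro ⟨i, j⟩ ⟨h1, h2, h3, h4⟩
    replace h3 : i < j := h3
    replace h4 : w j < w i := h4
    have hkey := key n hn1 w hper hfin i j h1 h2
    refine ⟨⟨h1, h2, ?_, ?_⟩, ⟨j - i, by ring⟩⟩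
    · have h5 : 0 ≤ (j - i) * (n:ℤ) := mul_nonneg (by omega) (by omega)
      show i < j + (j - i) * (n:ℤ)
      linarith
    · have hpos : 0 < ((n:ℤ) + 1) * (w i - w j) :=
        mul_pos (by omega) (by omega)
      show (gamInv n ∘ ⇑w ∘ gam n) (j + (j - i) * (n:ℤ)) < (gamInv n ∘ ⇑w ∘ gam n) i
      linarith
  · -- InjOn
    rintro ⟨i, j⟩ _ ⟨i', j'⟩ _ h
    simp only [Prod.mk.injEq] at h
    obtain ⟨h1, h2⟩ := h
    have h3 : (j - j') * ((n:ℤ) + 1) = 0 := by linear_combination h2 + (n:ℤ) * h1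
    rcases mul_eq_zero.mp h3 with h4 | h4
    · exact Prod.ext h1 (by omega)
    · omega
  · -- SurjOn
    rintro ⟨i, J⟩ ⟨⟨h1, h2, h3, h4⟩, d, hd⟩
    replace h3 : i < J := h3
    replace h4 : (gamInv n ∘ ⇑w ∘ gam n) J < (gamInv n ∘ ⇑w ∘ gam n) i := h4
    replace hd : J - i = ((n:ℤ) + 1) * d := hd
    have hd1 : 0 < d := by nlinarith
    refine ⟨(i, i + d), ?_, ?_⟩
    · have harg : i + d + (i + d - i) * (n:ℤ) = J := by linear_combination -hd
      have hkey := key n hn1 w hper hfin i (i + d) h1 h2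
      rw [harg] at hkey
      have hpos : 0 < ((n:ℤ) + 1) * (w i - w (i + d)) := by linarith
      have hwlt : w (i + d) < w i := by
        by_contra hcon
        push_neg at hcon
        have hle : ((n:ℤ) + 1) * (w i - w (i + d)) ≤ 0 :=
          mul_nonpos_of_nonneg_of_nonpos (by omega) (by omega)
        linarith
      exact ⟨h1, h2, by omega, hwlt⟩
    · have : i + d + (i + d - i) * (n:ℤ) = J := by linear_combination -hd
      simp only [Prod.mk.injEq]
      exact ⟨trivial, this⟩
end

section
/- Let n ≥ 2 and 1 ≤ i ≤ n−1, and let s_i ∈ S_n ⊆ Ŝ_n be the periodically extended simple transposition, i.e. the bijection of ℤ with s_i(k) = k+1 if k ≡ i mod n, s_i(k) = k−1 if k ≡ i+1 mod n, and s_i(k) = k otherwise. Then the element u = γ⁻¹ ∘ s_i ∘ γ of Ŝ_n satisfies u(i) = i+1+n, u(i+1) = i−n, and u(k) = k for all k ∈ {1,…,n} \ {i, i+1}; moreover the inversion set Inv(u) has exactly 2n−1 elements (i.e. γ⁻¹ s_i γ has length 2n−1 in Ŝ_n). -/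
/-- The periodically extended simple transposition `s_i`: `s_i(k) = k+1` if
`k ≡ i mod n`, `s_i(k) = k−1` if `k ≡ i+1 mod n`, and `s_i(k) = k` otherwise. -/
def sfun (n : ℕ) (i : ℕ) (k : ℤ) : ℤ :=
  if (k - (i : ℤ)) % (n : ℤ) = 0 then k + 1
  else if (k - ((i : ℤ) + 1)) % (n : ℤ) = 0 then k - 1
  else k

lemma sub_mul_emod (a n r : ℤ) : (a - n*r) % n = a % n := by
  rw [show a - n*r = a + n*(-r) by ring, Int.add_mul_emod_self_left]

lemma ufun_eq (n i : ℕ) (hn : 2 ≤ n) (hi1 : 1 ≤ i) (hi2 : i ≤ n - 1) (k : ℤ) :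
    (gamInv n ∘ sfun n i ∘ gam n) k =
    if (k - (i:ℤ)) % (n:ℤ) = 0 then k + 1 + n
    else if (k - ((i:ℤ)+1)) % (n:ℤ) = 0 then k - 1 - n else k := by
  have hn' : (2:ℤ) ≤ (n:ℤ) := by exact_mod_cast hn
  have hn0 : (0:ℤ) < (n:ℤ) := by omega
  have hi1' : (1:ℤ) ≤ (i:ℤ) := by exact_mod_cast hi1
  have hi2' : (i:ℤ) + 1 ≤ (n:ℤ) := by
    have : i + 1 ≤ n := by omega
    exact_mod_cast this
  set r := (k - 1) % (n:ℤ) with hr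
  have hgam : gam n k = k - n * r := rfl
  have hc1 : (k - (n:ℤ) * r - (i:ℤ)) % (n:ℤ) = (k - (i:ℤ)) % (n:ℤ) := by
    rw [show k - (n:ℤ)*r - (i:ℤ) = (k - (i:ℤ)) - (n:ℤ)*r by ring, sub_mul_emod ..]
  have hc2 : (k - (n:ℤ) * r - ((i:ℤ)+1)) % (n:ℤ) = (k - ((i:ℤ)+1)) % (n:ℤ) := by
    rw [show k - (n:ℤ)*r - ((i:ℤ)+1) = (k - ((i:ℤ)+1)) - (n:ℤ)*r by ring, sub_mul_emod ..]
  simp only [Function.comp_apply, hgam, sfun, hc1, hc2, gamInv]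
  split_ifs with h1 h2
  · -- k ≡ i mod n
    have hrk : r = (i:ℤ) - 1 := by
      rw [hr]
      have h : (k - 1) % (n:ℤ) = ((i:ℤ) - 1) % (n:ℤ) := by
        rw [Int.emod_eq_emod_iff_emod_sub_eq_zero]
        rw [show k - 1 - ((i:ℤ)-1) = k - (i:ℤ) by ring]
        exact h1
      rw [h, Int.emod_eq_of_lt (by omega) (by omega)]
    have hm : (k - (n:ℤ)*r + 1 - 1) % (n:ℤ) = (i:ℤ) := by
      rw [show k - (n:ℤ)*r + 1 - 1 = (k - (i:ℤ)) - (n:ℤ)*r + (i:ℤ) by ring]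
      rw [Int.emod_eq_emod_iff_emod_sub_eq_zero.mpr (by
        rw [show k - (i:ℤ) - (n:ℤ)*r + (i:ℤ) - (i:ℤ) = (k - (i:ℤ)) - (n:ℤ)*r by ring,
          sub_mul_emod ..]; exact h1)]
      exact Int.emod_eq_of_lt (by omega) (by omega)
    rw [hm, hrk]; ring
  · -- k ≡ i+1 mod n
    have hrk : r = (i:ℤ) := by
      rw [hr]
      have h : (k - 1) % (n:ℤ) = (i:ℤ) % (n:ℤ) := by
        rw [Int.emod_eq_emod_iff_emod_sub_eq_zero]
        rw [show k - 1 - (i:ℤ) = k - ((i:ℤ)+1) by ring]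
        exact h2
      rw [h, Int.emod_eq_of_lt (by omega) (by omega)]
    have hm : (k - (n:ℤ)*r - 1 - 1) % (n:ℤ) = (i:ℤ) - 1 := by
      rw [show k - (n:ℤ)*r - 1 - 1 = (k - ((i:ℤ)+1)) - (n:ℤ)*r + ((i:ℤ)-1) by ring]
      rw [Int.emod_eq_emod_iff_emod_sub_eq_zero.mpr (by
        rw [show k - ((i:ℤ)+1) - (n:ℤ)*r + ((i:ℤ)-1) - ((i:ℤ)-1) = (k - ((i:ℤ)+1)) - (n:ℤ)*r by ring,
          sub_mul_emod ..]; exact h2)]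
      exact Int.emod_eq_of_lt (by omega) (by omega)
    rw [hm, hrk]; ring
  · -- neither
    have hm : (k - (n:ℤ)*r - 1) % (n:ℤ) = r := by
      rw [show k - (n:ℤ)*r - 1 = (k - 1) - (n:ℤ)*r by ring, sub_mul_emod ..]
    rw [hm]; ring

lemma emod_zero_iff {n : ℤ} (hn : 0 < n) {x : ℤ} (h1 : -n < x) (h2 : x < n) :
    x % n = 0 ↔ x = 0 := by
  constructor
  · intro h
    exact Int.eq_zero_of_abs_lt_dvd (Int.dvd_of_emod_eq_zero h) (abs_lt.mpr ⟨h1, h2⟩)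
  · intro h; simp [h]

lemma c_le {n c d : ℤ} (hn : 0 < n) (h : n * c ≤ n * d) : c ≤ d :=
  le_of_mul_le_mul_left h hn

lemma c_lt {n c d : ℤ} (hn : 0 < n) (h : n * c < n * d) : c < d :=
  lt_of_mul_lt_mul_left h hn.le

lemma mem_iff (n i : ℕ) (hn : 2 ≤ n) (hi1 : 1 ≤ i) (hi2 : i ≤ n - 1) (a b : ℤ) :
    (a, b) ∈ InvSet n (gamInv n ∘ sfun n i ∘ gam n) ↔
    (a = (i:ℤ) ∧ (((i:ℤ)+1 ≤ b ∧ b ≤ (i:ℤ)+n-1) ∨ b = (i:ℤ)+n+1 ∨ b = (i:ℤ)+2*n+1)) ∨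
    (1 ≤ a ∧ a ≤ (i:ℤ)-1 ∧ b = (i:ℤ)+1) ∨
    ((i:ℤ)+2 ≤ a ∧ a ≤ (n:ℤ) ∧ b = (i:ℤ)+n+1) := by
  have hn' : (2:ℤ) ≤ (n:ℤ) := by exact_mod_cast hn
  have hn0 : (0:ℤ) < (n:ℤ) := by omega
  have hi1' : (1:ℤ) ≤ (i:ℤ) := by exact_mod_cast hi1
  have hi2' : (i:ℤ) + 1 ≤ (n:ℤ) := by
    have : i + 1 ≤ n := Nat.add_le_of_le_sub (by omega) hi2
    exact_mod_cast this
  have hub := ufun_eq n i hn hi1 hi2 b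
  have hua := ufun_eq n i hn hi1 hi2 a
  simp only [InvSet, Set.mem_setOf_eq]
  constructor
  · rintro ⟨h1, h2, h3, h4⟩
    rw [hua, hub] at h4
    have haiff : (a - (i:ℤ)) % (n:ℤ) = 0 ↔ a = (i:ℤ) :=
      (emod_zero_iff hn0 (by omega) (by omega)).trans (by omega)
    have haiff2 : (a - ((i:ℤ)+1)) % (n:ℤ) = 0 ↔ a = (i:ℤ)+1 :=
      (emod_zero_iff hn0 (by omega) (by omega)).trans (by omega)
    by_cases hA : a = (i:ℤ)
    · -- a = i, u a = a+1+n
      rw [if_pos (haiff.mpr hA)] at h4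
      by_cases hb1 : (b - (i:ℤ)) % (n:ℤ) = 0
      · exfalso
        obtain ⟨c, hc⟩ := Int.dvd_of_emod_eq_zero hb1
        rw [if_pos hb1] at h4
        omega
      · rw [if_neg hb1] at h4
        by_cases hb2 : (b - ((i:ℤ)+1)) % (n:ℤ) = 0
        · rw [if_pos hb2] at h4
          obtain ⟨c, hc⟩ := Int.dvd_of_emod_eq_zero hb2
          -- b > a = i so b - (i+1) ≥ 0 ⇒ c ≥ 0 ; h4 : b-1-n < a+1+n ⇒ b-(i+1) < 2n+1 ⇒ c ≤ 2
          have hc0 : 0 ≤ c := by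
            have := c_lt hn0 (show (n:ℤ) * (-1) < (n:ℤ) * c by rw [← hc]; omega)
            omega
          have hc2 : c ≤ 2 := by
            have := c_lt hn0 (show (n:ℤ) * c < (n:ℤ) * 3 by rw [← hc]; omega)
            omega
          interval_cases c <;> [left; left; left] <;>
            refine ⟨hA, ?_⟩ <;> omega
        · rw [if_neg hb2] at h4
          have hbn : b ≠ (i:ℤ) + (n:ℤ) := by
            intro h; apply hb1; rw [h]
            rw [show (i:ℤ) + (n:ℤ) - i = 0 + (n:ℤ)*1 by ring, Int.add_mul_emod_self_left]
            simp
          left; exact ⟨hA, Or.inl (by omega)⟩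
    · rw [if_neg (fun h => hA (haiff.mp h))] at h4
      by_cases hB : a = (i:ℤ) + 1
      · -- a = i+1, u a = a-1-n
        exfalso
        rw [if_pos (haiff2.mpr hB)] at h4
        by_cases hb1 : (b - (i:ℤ)) % (n:ℤ) = 0
        · rw [if_pos hb1] at h4; omega
        · rw [if_neg hb1] at h4
          by_cases hb2 : (b - ((i:ℤ)+1)) % (n:ℤ) = 0
          · rw [if_pos hb2] at h4
            obtain ⟨c, hc⟩ := Int.dvd_of_emod_eq_zero hb2
            have hc1 : 0 < c := by
              have := c_lt hn0 (show (n:ℤ) * 0 < (n:ℤ) * c by rw [← hc]; omega)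
              omega
            have : (n:ℤ) * 1 ≤ (n:ℤ) * c := mul_le_mul_of_nonneg_left (by omega) (by omega)
            omega
          · rw [if_neg hb2] at h4; omega
      · -- a ∉ {i, i+1}, u a = a
        rw [if_neg (fun h => hB (haiff2.mp h))] at h4
        by_cases hb1 : (b - (i:ℤ)) % (n:ℤ) = 0
        · rw [if_pos hb1] at h4; omega
        · rw [if_neg hb1] at h4
          by_cases hb2 : (b - ((i:ℤ)+1)) % (n:ℤ) = 0
          · rw [if_pos hb2] at h4
            obtain ⟨c, hc⟩ := Int.dvd_of_emod_eq_zero hb2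
            by_cases hlo : a ≤ (i:ℤ) - 1
            · -- c = 0
              have hc0 : 0 ≤ c := by
                have := c_lt hn0 (show (n:ℤ) * (-1) < (n:ℤ) * c by rw [← hc]; omega)
                omega
              have hc2 : c < 1 := by
                have := c_lt hn0 (show (n:ℤ) * c < (n:ℤ) * 1 by rw [← hc]; omega)
                omega
              have : c = 0 := by omega
              subst this
              right; left; exact ⟨by omega, hlo, by omega⟩
            · -- a ≥ i+2, c = 1
              have ha2 : (i:ℤ) + 2 ≤ a := by omega
              have hc1 : 0 < c := by
                have := c_lt hn0 (show (n:ℤ) * 0 < (n:ℤ) * c by rw [← hc]; omega)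
                omega
              have hc1' : c < 2 := by
                have := c_lt hn0 (show (n:ℤ) * c < (n:ℤ) * 2 by rw [← hc]; omega)
                omega
              have : c = 1 := by omega
              subst this
              right; right; exact ⟨ha2, h2, by omega⟩
          · rw [if_neg hb2] at h4; omega
  · -- reverse
    intro h
    have key : ∀ x : ℤ, 1 ≤ x → x ≤ (n:ℤ) → x ≠ (i:ℤ) → x ≠ (i:ℤ)+1 →
        (gamInv n ∘ sfun n i ∘ gam n) x = x := by
      intro x hx1 hx2 hxi hxi1
      rw [ufun_eq n i hn hi1 hi2 x,
        if_neg (fun h => hxi (by have := (emod_zero_iff hn0 (by omega) (by omega)).mp h; omega)),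
        if_neg (fun h => hxi1 (by have := (emod_zero_iff hn0 (by omega) (by omega)).mp h; omega))]
    have key2 : ∀ x : ℤ, (i:ℤ)+2 ≤ x → x ≤ (i:ℤ)+n-1 →
        (gamInv n ∘ sfun n i ∘ gam n) x = x := by
      intro x hx1 hx2
      rw [ufun_eq n i hn hi1 hi2 x,
        if_neg (fun h => by have := (emod_zero_iff hn0 (by omega) (by omega)).mp h; omega),
        if_neg (fun h => by have := (emod_zero_iff hn0 (by omega) (by omega)).mp h; omega)]
    have ui : (gamInv n ∘ sfun n i ∘ gam n) (i:ℤ) = (i:ℤ) + 1 + n := by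
      rw [ufun_eq n i hn hi1 hi2, if_pos (by simp)]
    have ui1 : (gamInv n ∘ sfun n i ∘ gam n) ((i:ℤ)+1) = (i:ℤ) - n := by
      rw [ufun_eq n i hn hi1 hi2,
        if_neg (fun h => by have := (emod_zero_iff hn0 (by omega) (by omega)).mp h; omega),
        if_pos (by simp)]
      ring
    have uin1 : (gamInv n ∘ sfun n i ∘ gam n) ((i:ℤ)+n+1) = (i:ℤ) := by
      rw [ufun_eq n i hn hi1 hi2,
        if_neg (by
          rw [show (i:ℤ)+n+1 - i = 1 + (n:ℤ)*1 by ring, Int.add_mul_emod_self_left,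
            Int.emod_eq_of_lt (by omega) (by omega)]; omega),
        if_pos (by rw [show (i:ℤ)+n+1 - (i+1) = 0 + (n:ℤ)*1 by ring, Int.add_mul_emod_self_left]; simp)]
      ring
    have ui2n1 : (gamInv n ∘ sfun n i ∘ gam n) ((i:ℤ)+2*n+1) = (i:ℤ) + n := by
      rw [ufun_eq n i hn hi1 hi2,
        if_neg (by
          rw [show (i:ℤ)+2*n+1 - i = 1 + (n:ℤ)*2 by ring, Int.add_mul_emod_self_left,
            Int.emod_eq_of_lt (by omega) (by omega)]; omega),
        if_pos (by rw [show (i:ℤ)+2*n+1 - (i+1) = 0 + (n:ℤ)*2 by ring, Int.add_mul_emod_self_left]; simp)]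
      ring
    rcases h with ⟨rfl, hb⟩ | ⟨h1, h2, rfl⟩ | ⟨h1, h2, rfl⟩
    · refine ⟨by omega, by omega, by rcases hb with ⟨hb1, hb2⟩ | rfl | rfl <;> omega, ?_⟩
      rw [ui]
      rcases hb with ⟨hb1, hb2⟩ | rfl | rfl
      · by_cases hbe : b = (i:ℤ)+1
        · rw [hbe, ui1]; omega
        · rw [key2 b (by omega) (by omega)]; omega
      · rw [uin1]; omega
      · rw [ui2n1]; omega
    · refine ⟨h1, by omega, by omega, ?_⟩
      rw [ui1, key a (by omega) (by omega) (by omega) (by omega)]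
      omega
    · refine ⟨by omega, h2, by omega, ?_⟩
      rw [uin1, key a (by omega) (by omega) (by omega) (by omega)]
      omega

lemma ncard_eq (n i : ℕ) (hn : 2 ≤ n) (hi1 : 1 ≤ i) (hi2 : i ≤ n - 1) :
    (InvSet n (gamInv n ∘ sfun n i ∘ gam n)).ncard = 2 * n - 1 := by
  classical
  have hn' : (2:ℤ) ≤ (n:ℤ) := by exact_mod_cast hn
  have hi1' : (1:ℤ) ≤ (i:ℤ) := by exact_mod_cast hi1
  have hi2' : (i:ℤ) + 1 ≤ (n:ℤ) := by
    have : i + 1 ≤ n := Nat.add_le_of_le_sub (by omega) hi2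
    exact_mod_cast this
  set F1 : Finset (ℤ × ℤ) := (Finset.Icc ((i:ℤ)+1) ((i:ℤ)+n-1)).image (fun b => ((i:ℤ), b)) with hF1
  set F2 : Finset (ℤ × ℤ) := {((i:ℤ), (i:ℤ)+n+1), ((i:ℤ), (i:ℤ)+2*n+1)} with hF2
  set F3 : Finset (ℤ × ℤ) := (Finset.Icc (1:ℤ) ((i:ℤ)-1)).image (fun a => (a, (i:ℤ)+1)) with hF3
  set F4 : Finset (ℤ × ℤ) := (Finset.Icc ((i:ℤ)+2) (n:ℤ)).image (fun a => (a, (i:ℤ)+n+1)) with hF4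
  have m1 : ∀ p : ℤ × ℤ, p ∈ F1 ↔ p.1 = (i:ℤ) ∧ (i:ℤ)+1 ≤ p.2 ∧ p.2 ≤ (i:ℤ)+n-1 := by
    rintro ⟨a, b⟩
    simp only [hF1, Finset.mem_image, Finset.mem_Icc, Prod.mk.injEq]
    constructor
    · rintro ⟨x, ⟨hx1, hx2⟩, rfl, rfl⟩; exact ⟨rfl, hx1, hx2⟩
    · rintro ⟨rfl, h1, h2⟩; exact ⟨b, ⟨h1, h2⟩, rfl, rfl⟩
  have m2 : ∀ p : ℤ × ℤ, p ∈ F2 ↔ p = ((i:ℤ), (i:ℤ)+n+1) ∨ p = ((i:ℤ), (i:ℤ)+2*n+1) := by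
    intro p; simp [hF2]
  have m3 : ∀ p : ℤ × ℤ, p ∈ F3 ↔ 1 ≤ p.1 ∧ p.1 ≤ (i:ℤ)-1 ∧ p.2 = (i:ℤ)+1 := by
    rintro ⟨a, b⟩
    simp only [hF3, Finset.mem_image, Finset.mem_Icc, Prod.mk.injEq]
    constructor
    · rintro ⟨x, ⟨hx1, hx2⟩, rfl, rfl⟩; exact ⟨hx1, hx2, rfl⟩
    · rintro ⟨h1, h2, rfl⟩; exact ⟨a, ⟨h1, h2⟩, rfl, rfl⟩
  have m4 : ∀ p : ℤ × ℤ, p ∈ F4 ↔ (i:ℤ)+2 ≤ p.1 ∧ p.1 ≤ (n:ℤ) ∧ p.2 = (i:ℤ)+n+1 := by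
    rintro ⟨a, b⟩
    simp only [hF4, Finset.mem_image, Finset.mem_Icc, Prod.mk.injEq]
    constructor
    · rintro ⟨x, ⟨hx1, hx2⟩, rfl, rfl⟩; exact ⟨hx1, hx2, rfl⟩
    · rintro ⟨h1, h2, rfl⟩; exact ⟨a, ⟨h1, h2⟩, rfl, rfl⟩
  have hset : InvSet n (gamInv n ∘ sfun n i ∘ gam n) = ↑(F1 ∪ F2 ∪ F3 ∪ F4) := by
    ext ⟨a, b⟩
    rw [mem_iff n i hn hi1 hi2, Finset.coe_union, Finset.coe_union, Finset.coe_union]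
    simp only [Set.mem_union, Finset.mem_coe]
    rw [m1, m2, m3, m4]
    simp only [Prod.ext_iff]
    constructor
    · rintro (⟨rfl, ⟨hb1, hb2⟩ | rfl | rfl⟩ | h | h)
      · exact Or.inl (Or.inl (Or.inl ⟨rfl, hb1, hb2⟩))
      · exact Or.inl (Or.inl (Or.inr (Or.inl ⟨rfl, rfl⟩)))
      · exact Or.inl (Or.inl (Or.inr (Or.inr ⟨rfl, rfl⟩)))
      · exact Or.inl (Or.inr h)
      · exact Or.inr h
    · rintro (((⟨h1, h2, h3⟩ | ⟨h1, h2⟩ | ⟨h1, h2⟩) | h) | h)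
      · exact Or.inl ⟨h1, Or.inl ⟨h2, h3⟩⟩
      · exact Or.inl ⟨h1, Or.inr (Or.inl h2)⟩
      · exact Or.inl ⟨h1, Or.inr (Or.inr h2)⟩
      · exact Or.inr (Or.inl h)
      · exact Or.inr (Or.inr h)
  rw [hset, Set.ncard_coe_finset]
  have d12 : Disjoint F1 F2 := by
    rw [Finset.disjoint_left]
    intro p h1 h2
    rw [m1] at h1; rw [m2] at h2
    rcases h2 with rfl | rfl <;> simp at h1 <;> omega
  have d123 : Disjoint (F1 ∪ F2) F3 := by
    rw [Finset.disjoint_left]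
    intro p h1 h2
    rw [m3] at h2
    rcases Finset.mem_union.mp h1 with h | h
    · rw [m1] at h; omega
    · rw [m2] at h; rcases h with rfl | rfl <;> simp at h2 <;> omega
  have d1234 : Disjoint (F1 ∪ F2 ∪ F3) F4 := by
    rw [Finset.disjoint_left]
    intro p h1 h2
    rw [m4] at h2
    rcases Finset.mem_union.mp h1 with h | h
    · rcases Finset.mem_union.mp h with h | h
      · rw [m1] at h; omega
      · rw [m2] at h; rcases h with rfl | rfl <;> simp at h2 <;> omega
    · rw [m3] at h; omega
  rw [Finset.card_union_of_disjoint d1234, Finset.card_union_of_disjoint d123,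
    Finset.card_union_of_disjoint d12]
  have inj1 : (F1.card = (Finset.Icc ((i:ℤ)+1) ((i:ℤ)+n-1)).card) :=
    Finset.card_image_of_injective _ (fun x y h => congrArg Prod.snd h)
  have inj3 : (F3.card = (Finset.Icc (1:ℤ) ((i:ℤ)-1)).card) :=
    Finset.card_image_of_injective _ (fun x y h => congrArg Prod.fst h)
  have inj4 : (F4.card = (Finset.Icc ((i:ℤ)+2) (n:ℤ)).card) :=
    Finset.card_image_of_injective _ (fun x y h => congrArg Prod.fst h)
  have c2 : F2.card = 2 := by
    rw [hF2, Finset.card_insert_of_notMem (by simp; omega), Finset.card_singleton]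
  rw [inj1, inj3, inj4, c2, Int.card_Icc, Int.card_Icc, Int.card_Icc]
  omega

theorem statement2 (n i : ℕ) (hn : 2 ≤ n) (hi1 : 1 ≤ i) (hi2 : i ≤ n - 1) :
    (gamInv n ∘ sfun n i ∘ gam n) (i : ℤ) = (i : ℤ) + 1 + n ∧
    (gamInv n ∘ sfun n i ∘ gam n) ((i : ℤ) + 1) = (i : ℤ) - n ∧
    (∀ k : ℤ, 1 ≤ k → k ≤ (n : ℤ) → k ≠ (i : ℤ) → k ≠ (i : ℤ) + 1 →
      (gamInv n ∘ sfun n i ∘ gam n) k = k) ∧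
    (InvSet n (gamInv n ∘ sfun n i ∘ gam n)).ncard = 2 * n - 1 := by
  have hn' : (2:ℤ) ≤ (n:ℤ) := by exact_mod_cast hn
  have hn0 : (0:ℤ) < (n:ℤ) := by omega
  have hi1' : (1:ℤ) ≤ (i:ℤ) := by exact_mod_cast hi1
  have hi2' : (i:ℤ) + 1 ≤ (n:ℤ) := by
    have : i + 1 ≤ n := Nat.add_le_of_le_sub (by omega) hi2
    exact_mod_cast this
  refine ⟨?_, ?_, ?_, ncard_eq n i hn hi1 hi2⟩
  · rw [ufun_eq n i hn hi1 hi2, if_pos (by simp)]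
  · rw [ufun_eq n i hn hi1 hi2,
      if_neg (fun h => by have := (emod_zero_iff hn0 (by omega) (by omega)).mp h; omega),
      if_pos (by simp)]
    ring
  · intro k hk1 hk2 hki hki1
    rw [ufun_eq n i hn hi1 hi2 k,
      if_neg (fun h => hki (by have := (emod_zero_iff hn0 (by omega) (by omega)).mp h; omega)),
      if_neg (fun h => hki1 (by have := (emod_zero_iff hn0 (by omega) (by omega)).mp h; omega))]
end

section
/- Let n ≥ 2 and define b^ρ : ℤ → ℤ by b^ρ(j) = ((j−1) mod n) − ⌊(j−1)/n⌋. Then for every u ∈ Ŝ_n one has b^ρ ∘ u = b^ρ if and only if γ ∘ u ∘ γ⁻¹ ∈ S_n; in other words, the stabilizer of the quasi-periodic sequence b^ρ under the action of Ŝ_n (acting by (u·b)(i) = b(u⁻¹(i))) is exactly the conjugate subgroup γ⁻¹ S_n γ. -/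
/-- The quasi-periodic sequence `b^ρ(j) = ((j−1) mod n) − ⌊(j−1)/n⌋`. -/
def brho (n : ℕ) (j : ℤ) : ℤ := (j - 1) % (n : ℤ) - (j - 1) / (n : ℤ)

lemma brho_shift (n : ℕ) (hn : 0 < n) (k m : ℤ) :
    brho n (k + n * m) = brho n k - m := by
  have hn' : (n : ℤ) ≠ 0 := by exact_mod_cast hn.ne'
  unfold brho
  rw [show k + (n : ℤ) * m - 1 = (k - 1) + (n : ℤ) * m by ring,
    Int.add_mul_emod_self_left, Int.add_mul_ediv_left _ _ hn']
  ring

lemma gam_mem_iff (n : ℕ) (hn : 2 ≤ n) (j : ℤ) :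
    (1 ≤ gam n j ∧ gam n j ≤ (n : ℤ)) ↔ brho n j = 0 := by
  have hn0 : (0 : ℤ) < n := by exact_mod_cast Nat.lt_of_lt_of_le Nat.zero_lt_two hn
  set r := (j - 1) % (n : ℤ) with hr
  set q := (j - 1) / (n : ℤ) with hq
  have hr0 : 0 ≤ r := Int.emod_nonneg _ hn0.ne'
  have hrn : r < n := Int.emod_lt_of_pos _ hn0
  have hj : (n : ℤ) * q + r = j - 1 := Int.mul_ediv_add_emod _ _
  have hgam : gam n j = 1 + (n : ℤ) * q + r - n * r := by
    unfold gam; rw [← hr]; omega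
  have hbr : brho n j = r - q := rfl
  rw [hgam, hbr]
  constructor
  · rintro ⟨h1, h2⟩
    rcases lt_trichotomy q r with h | h | h
    · -- q ≤ r - 1 : n*(q-r) ≤ -n
      exfalso
      have : (n : ℤ) * (q - r) ≤ n * (-1) :=
        mul_le_mul_of_nonneg_left (by omega) hn0.le
      nlinarith
    · omega
    · exfalso
      have : (n : ℤ) * 1 ≤ n * (q - r) :=
        mul_le_mul_of_nonneg_left (by omega) hn0.le
      nlinarith
  · intro h
    have hqr : q = r := by omega
    rw [hqr]
    have : (1:ℤ) + n * r + r - n * r = 1 + r := by ring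
    rw [this]
    omega

lemma brho_gamInv (n : ℕ) (hn : 2 ≤ n) (k : ℤ) (h1 : 1 ≤ k) (h2 : k ≤ (n : ℤ)) :
    brho n (gamInv n k) = 0 := by
  have hn0 : (0 : ℤ) < n := by exact_mod_cast Nat.lt_of_lt_of_le Nat.zero_lt_two hn
  have hmod : (k - 1) % (n : ℤ) = k - 1 := Int.emod_eq_of_lt (by omega) (by omega)
  have hgi : gamInv n k = 1 + (k - 1) + (n : ℤ) * (k - 1) := by
    unfold gamInv; rw [hmod]; ring
  have := brho_shift n (by omega) (1 + (k - 1)) (k - 1)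
  rw [hgi, this]
  unfold brho
  have h1' : (1 + (k - 1) - 1) % (n : ℤ) = k - 1 := by rw [show 1+(k-1)-1 = k-1 by ring, hmod]
  have h2' : (1 + (k - 1) - 1) / (n : ℤ) = 0 := by
    rw [show 1+(k-1)-1 = k-1 by ring]; exact Int.ediv_eq_zero_of_lt (by omega) (by omega)
  omega

lemma exists_of_brho_zero (n : ℕ) (hn : 2 ≤ n) (j : ℤ) (h : brho n j = 0) :
    ∃ m : ℤ, 1 ≤ m ∧ m ≤ (n : ℤ) ∧ gamInv n m = j := by
  have hn0 : (0 : ℤ) < n := by exact_mod_cast Nat.lt_of_lt_of_le Nat.zero_lt_two hn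
  set r := (j - 1) % (n : ℤ) with hr
  set q := (j - 1) / (n : ℤ) with hq
  have hr0 : 0 ≤ r := Int.emod_nonneg _ hn0.ne'
  have hrn : r < n := Int.emod_lt_of_pos _ hn0
  have hj : (n : ℤ) * q + r = j - 1 := Int.mul_ediv_add_emod _ _
  have hqr : q = r := by
    have : brho n j = r - q := rfl
    omega
  refine ⟨r + 1, by omega, by omega, ?_⟩
  unfold gamInv
  have : (r + 1 - 1) % (n : ℤ) = r := by
    rw [show r + 1 - 1 = r by ring]; exact Int.emod_eq_of_lt hr0 hrn
  rw [this]
  rw [hqr] at hj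
  omega

theorem statement3 (n : ℕ) (hn : 2 ≤ n) (u : Equiv.Perm ℤ)
    (hper : ∀ k : ℤ, u (k + n) = u k + n) :
    (∀ k : ℤ, brho n (u k) = brho n k) ↔
      (∀ k : ℤ, 1 ≤ k → k ≤ (n : ℤ) →
        1 ≤ gam n (u (gamInv n k)) ∧ gam n (u (gamInv n k)) ≤ (n : ℤ)) := by
  have hn0 : 0 < n := Nat.lt_of_lt_of_le Nat.zero_lt_two hn
  have hper' : ∀ m : ℤ, ∀ k : ℤ, u (k + n * m) = u k + n * m := by
    intro m
    induction m using Int.induction_on with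
    | zero => simp
    | succ i ih =>
        intro k
        have := hper (k + n * i)
        rw [show k + (n:ℤ) * (i+1) = k + n * i + n by ring, this, ih k]; ring
    | pred i ih =>
        intro k
        have := hper (k + n * (-i - 1))
        rw [show k + (n:ℤ) * (-i-1) + n = k + n * (-i) by ring] at this
        have h2 := ih k
        have e : (n:ℤ) * (-(i:ℤ) - 1) = (n:ℤ) * -(i:ℤ) - n := by ring
        omega
  constructor
  · intro h k h1 h2
    rw [gam_mem_iff n hn, h]
    exact brho_gamInv n hn k h1 h2
  · intro h k
    set v := brho n k with hv
    have hz : brho n (k + n * v) = 0 := by rw [brho_shift n hn0 k v]; omega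
    obtain ⟨m, hm1, hm2, hm3⟩ := exists_of_brho_zero n hn _ hz
    have := (gam_mem_iff n hn (u (gamInv n m))).mp (h m hm1 hm2)
    rw [hm3, hper' v k, brho_shift n hn0 (u k) v] at this
    omega
end

section
/- Let κ be a commutative ring, N ≥ 1, V = κ^N with standard basis e_1,…,e_N, and let a, b ∈ κ^N with A, B ∈ M_N(κ) the diagonal matrices diag(a₁,…,a_N) and diag(b₁,…,b_N). For a polynomial p ∈ κ[x₁,…,x_N, y₁,…,y_N], let p_{A,B} ∈ End_κ(V^{⊗N}) be the image of p under the κ-algebra homomorphism sending x_i to the operator acting by A in the i-th tensor factor (and by the identity in all other factors) and y_i to the operator acting by B in the i-th tensor factor; these 2N operators pairwise commute, so this algebra homomorphism is well defined. Let z = Σ_{σ ∈ S_N} sgn(σ) · e_{σ(1)} ⊗ ⋯ ⊗ e_{σ(N)} ∈ V^{⊗N}. If p is invariant under the diagonal S_N-action on the variables (i.e. p(x_{σ(1)},…,x_{σ(N)}, y_{σ(1)},…,y_{σ(N)}) = p for every σ ∈ S_N), then p_{A,B}(z) = p(a₁,…,a_N, b₁,…,b_N) · z. -/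
/-!
Statement 4: Let `κ` be a commutative ring, `V = κ^N`, and `A`, `B` the diagonal
matrices with entries `a`, `b`. For `p ∈ κ[x₁,…,x_N,y₁,…,y_N]`, let `p_{A,B}`
be the image of `p` under the `κ`-algebra homomorphism on `End(V^{⊗N})` sending
`x_i` (resp. `y_i`) to the operator acting by `A` (resp. `B`) in the `i`-th
tensor factor.  If `p` is invariant under the diagonal `S_N`-action on the
variables, then `p_{A,B}(z) = p(a,b) · z`, where
`z = Σ_σ sgn(σ) e_{σ(1)} ⊗ ⋯ ⊗ e_{σ(N)}`.
-/

noncomputable section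

/-- The diagonal matrix `diag(c₁,…,c_N)` as an endomorphism of `κ^N`. -/
def diagOp (κ : Type) [CommRing κ] (N : ℕ) (c : Fin N → κ) :
    (Fin N → κ) →ₗ[κ] (Fin N → κ) :=
  LinearMap.pi fun r => c r • LinearMap.proj r

/-- The operator on `V^{⊗N}` acting by `f` in the `i`-th tensor factor and by
the identity in all other factors. -/
def factorOp (κ : Type) [CommRing κ] (N : ℕ) (i : Fin N)
    (f : (Fin N → κ) →ₗ[κ] (Fin N → κ)) :
    Module.End κ (PiTensorProduct κ (fun _ : Fin N => Fin N → κ)) :=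
  PiTensorProduct.map (Function.update (fun _ : Fin N => LinearMap.id) i f)

/-- The alternating tensor `z = Σ_{σ ∈ S_N} sgn(σ) · e_{σ(1)} ⊗ ⋯ ⊗ e_{σ(N)}`. -/
def altZ (κ : Type) [CommRing κ] (N : ℕ) :
    PiTensorProduct κ (fun _ : Fin N => Fin N → κ) :=
  ∑ σ : Equiv.Perm (Fin N), ((Equiv.Perm.sign σ : ℤ) : κ) •
    PiTensorProduct.tprod κ (fun i => Pi.single (σ i) (1 : κ))

lemma eig_aux (κ : Type) [CommRing κ] (N : ℕ) (c : Fin N → κ) (i : Fin N)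
    (σ : Equiv.Perm (Fin N)) :
    factorOp κ N i (diagOp κ N c)
      (PiTensorProduct.tprod κ (fun j => Pi.single (σ j) (1 : κ)))
      = c (σ i) • PiTensorProduct.tprod κ (fun j => Pi.single (σ j) (1 : κ)) := by
  rw [factorOp, PiTensorProduct.map_tprod]
  have h1 : (fun j => Function.update (fun _ : Fin N => LinearMap.id) i (diagOp κ N c) j
      ((fun j => (Pi.single (σ j) (1:κ) : Fin N → κ)) j))
      = Function.update (fun j => Pi.single (σ j) (1:κ)) i
          (c (σ i) • (Pi.single (σ i) (1:κ) : Fin N → κ)) := by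
    funext j
    by_cases h : j = i
    · subst h
      simp only [Function.update_self]
      funext r
      simp only [diagOp, LinearMap.pi_apply, LinearMap.smul_apply, LinearMap.proj_apply,
        Pi.smul_apply, smul_eq_mul]
      by_cases hr : r = σ j
      · subst hr; simp
      · simp [Pi.single_eq_of_ne hr]
    · simp [Function.update_of_ne h]
  rw [h1, MultilinearMap.map_update_smul, Function.update_eq_self]

lemma phi_tprod (κ : Type) [CommRing κ] (N : ℕ) (a b : Fin N → κ)
    (φ : MvPolynomial (Fin N ⊕ Fin N) κ →ₐ[κ]
        Module.End κ (PiTensorProduct κ (fun _ : Fin N => Fin N → κ)))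
    (hφa : ∀ i : Fin N, φ (MvPolynomial.X (Sum.inl i)) = factorOp κ N i (diagOp κ N a))
    (hφb : ∀ i : Fin N, φ (MvPolynomial.X (Sum.inr i)) = factorOp κ N i (diagOp κ N b))
    (σ : Equiv.Perm (Fin N)) (p : MvPolynomial (Fin N ⊕ Fin N) κ) :
    φ p (PiTensorProduct.tprod κ (fun j => Pi.single (σ j) (1 : κ)))
      = MvPolynomial.eval (Sum.elim (a ∘ σ) (b ∘ σ)) p •
        PiTensorProduct.tprod κ (fun j => (Pi.single (σ j) (1 : κ) : Fin N → κ)) := by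
  set T := PiTensorProduct.tprod κ (fun j => (Pi.single (σ j) (1 : κ) : Fin N → κ)) with hT
  have heig : ∀ s : Fin N ⊕ Fin N, φ (MvPolynomial.X s) T = Sum.elim (a ∘ σ) (b ∘ σ) s • T := by
    rintro (i | i)
    · rw [hφa i]; exact eig_aux κ N a i σ
    · rw [hφb i]; exact eig_aux κ N b i σ
  induction p using MvPolynomial.induction_on with
  | C r => simp [MvPolynomial.algHom_C, Module.algebraMap_end_apply]
  | add q r hq hr =>
      simp only [map_add, LinearMap.add_apply, hq, hr, add_smul]
  | mul_X q s hq =>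
      rw [map_mul, Module.End.mul_apply, heig s, map_smul, hq, map_mul,
        MvPolynomial.eval_X, mul_smul, smul_comm]

theorem statement4 (κ : Type) [CommRing κ] (N : ℕ) (hN : 1 ≤ N)
    (a b : Fin N → κ)
    (φ : MvPolynomial (Fin N ⊕ Fin N) κ →ₐ[κ]
        Module.End κ (PiTensorProduct κ (fun _ : Fin N => Fin N → κ)))
    (hφa : ∀ i : Fin N, φ (MvPolynomial.X (Sum.inl i)) = factorOp κ N i (diagOp κ N a))
    (hφb : ∀ i : Fin N, φ (MvPolynomial.X (Sum.inr i)) = factorOp κ N i (diagOp κ N b))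
    (p : MvPolynomial (Fin N ⊕ Fin N) κ)
    (hp : ∀ σ : Equiv.Perm (Fin N), MvPolynomial.rename (Sum.map ⇑σ ⇑σ) p = p) :
    φ p (altZ κ N) = MvPolynomial.eval (Sum.elim a b) p • altZ κ N := by
  have key : ∀ σ : Equiv.Perm (Fin N),
      MvPolynomial.eval (Sum.elim (a ∘ σ) (b ∘ σ)) p = MvPolynomial.eval (Sum.elim a b) p := by
    intro σ
    conv_rhs => rw [← hp σ]
    rw [MvPolynomial.eval_rename]
    have h2 : (Sum.elim a b ∘ Sum.map ⇑σ ⇑σ) = Sum.elim (a ∘ σ) (b ∘ σ) :=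
      funext fun s => by cases s <;> rfl
    rw [h2]
  rw [altZ, map_sum, Finset.smul_sum]
  refine Finset.sum_congr rfl fun σ _ => ?_
  rw [map_smul, phi_tprod κ N a b φ hφa hφb σ p, key σ, smul_comm]

end
end

section
/- Let 1^N denote the one-dimensional K[Y^{±}]-module on which every Y_i acts by 1. Then the endomorphism algebra End_D(D ⊗_{K[Y^{±}]} 1^N) is isomorphic as a K-algebra to the opposite K[S_N]^op of the group algebra of the symmetric group S_N. -/
/-!
Statement 11: Let `K` be a field of characteristic zero, `q ∈ K^×` not a root
of unity, and `D = D_q(H) # S_N` the smash product of the quantum torus with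
the symmetric group (presented by generators `X_i^{±1}`, `Y_i^{±1}`, `s_w` and
the listed relations).  Let `1^N` be the one-dimensional `K[Y^{±}]`-module on
which every `Y_i` acts by `1`.  Then `End_D(D ⊗_{K[Y^{±}]} 1^N)` is isomorphic
as a `K`-algebra to `K[S_N]^op`.

The induced module `D ⊗_{K[Y^{±}]} 1^N` is realized as the quotient of `D` by
the left ideal generated by the elements `Y_i − 1` and `Y_i^{-1} − 1`.
-/

noncomputable section

/-- Generators of the smash product `D = D_q(H) # S_N`. -/
inductive SGen (N : ℕ) : Type
  | X : Fin N → SGen N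
  | Xinv : Fin N → SGen N
  | Y : Fin N → SGen N
  | Yinv : Fin N → SGen N
  | S : Equiv.Perm (Fin N) → SGen N

/-- The generator embedding into the free algebra. -/
def sg (K : Type) [Field K] {N : ℕ} (g : SGen N) : FreeAlgebra K (SGen N) :=
  FreeAlgebra.ι K g

/-- The defining relations of the smash product `D_q(H) # S_N`:
the `X_i` pairwise commute and are invertible, the `Y_i` pairwise commute and
are invertible, `Y_i X_j = X_j Y_i` for `i ≠ j`, `Y_i X_i = q X_i Y_i`,
`s_w s_{w'} = s_{ww'}`, `s_id = 1`, `s_w X_i s_w^{-1} = X_{w(i)}` and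
`s_w Y_i s_w^{-1} = Y_{w(i)}`. -/
inductive SRel (K : Type) [Field K] (N : ℕ) (q : Kˣ) :
    FreeAlgebra K (SGen N) → FreeAlgebra K (SGen N) → Prop
  | XX (i j : Fin N) :
      SRel K N q (sg K (.X i) * sg K (.X j)) (sg K (.X j) * sg K (.X i))
  | XXinv (i : Fin N) : SRel K N q (sg K (.X i) * sg K (.Xinv i)) 1
  | XinvX (i : Fin N) : SRel K N q (sg K (.Xinv i) * sg K (.X i)) 1
  | YY (i j : Fin N) :
      SRel K N q (sg K (.Y i) * sg K (.Y j)) (sg K (.Y j) * sg K (.Y i))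
  | YYinv (i : Fin N) : SRel K N q (sg K (.Y i) * sg K (.Yinv i)) 1
  | YinvY (i : Fin N) : SRel K N q (sg K (.Yinv i) * sg K (.Y i)) 1
  | YXne (i j : Fin N) (h : i ≠ j) :
      SRel K N q (sg K (.Y i) * sg K (.X j)) (sg K (.X j) * sg K (.Y i))
  | YXeq (i : Fin N) :
      SRel K N q (sg K (.Y i) * sg K (.X i)) ((q : K) • (sg K (.X i) * sg K (.Y i)))
  | Smul (w w' : Equiv.Perm (Fin N)) :
      SRel K N q (sg K (.S w) * sg K (.S w')) (sg K (.S (w * w')))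
  | Sone : SRel K N q (sg K (.S 1)) 1
  | SX (w : Equiv.Perm (Fin N)) (i : Fin N) :
      SRel K N q (sg K (.S w) * sg K (.X i)) (sg K (.X (w i)) * sg K (.S w))
  | SY (w : Equiv.Perm (Fin N)) (i : Fin N) :
      SRel K N q (sg K (.S w) * sg K (.Y i)) (sg K (.Y (w i)) * sg K (.S w))

/-- The smash product `D = D_q(H) # S_N`, presented by generators and relations. -/
abbrev SmashD (K : Type) [Field K] (N : ℕ) (q : Kˣ) := RingQuot (SRel K N q)

/-- The element `Y_i` of `D`. -/
def Ye (K : Type) [Field K] {N : ℕ} (q : Kˣ) (i : Fin N) : SmashD K N q :=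
  RingQuot.mkAlgHom K (SRel K N q) (sg K (.Y i))

/-- The element `Y_i^{-1}` of `D`. -/
def YeInv (K : Type) [Field K] {N : ℕ} (q : Kˣ) (i : Fin N) : SmashD K N q :=
  RingQuot.mkAlgHom K (SRel K N q) (sg K (.Yinv i))

/-- The left ideal of `D` presenting the induced module `D ⊗_{K[Y^{±}]} 1^N`,
generated by the elements `Y_i − 1` and `Y_i^{-1} − 1`. -/
def unipIdeal (K : Type) [Field K] (N : ℕ) (q : Kˣ) :
    Submodule (SmashD K N q) (SmashD K N q) :=
  Submodule.span (SmashD K N q)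
    ((Set.range fun i : Fin N => Ye K q i - 1) ∪
      (Set.range fun i : Fin N => YeInv K q i - 1))

namespace S11

variable (K : Type) [Field K] {N : ℕ} (q : Kˣ)

/-- abbreviation for the canonical map to the quotient. -/
def mkD : FreeAlgebra K (SGen N) →ₐ[K] SmashD K N q := RingQuot.mkAlgHom K (SRel K N q)

lemma mk_rel {a b : FreeAlgebra K (SGen N)} (h : SRel K N q a b) :
    mkD K q a = mkD K q b := RingQuot.mkAlgHom_rel K h

/-- The unit `X_i`. -/
def U (i : Fin N) : (SmashD K N q)ˣ where
  val := mkD K q (sg K (.X i))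
  inv := mkD K q (sg K (.Xinv i))
  val_inv := by rw [← map_mul, mk_rel K q (SRel.XXinv i), map_one]
  inv_val := by rw [← map_mul, mk_rel K q (SRel.XinvX i), map_one]

/-- The unit `Y_i`. -/
def V (i : Fin N) : (SmashD K N q)ˣ where
  val := mkD K q (sg K (.Y i))
  inv := mkD K q (sg K (.Yinv i))
  val_inv := by rw [← map_mul, mk_rel K q (SRel.YYinv i), map_one]
  inv_val := by rw [← map_mul, mk_rel K q (SRel.YinvY i), map_one]

/-- The unit `s_w`. -/
def W0 (w : Equiv.Perm (Fin N)) : (SmashD K N q)ˣ where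
  val := mkD K q (sg K (.S w))
  inv := mkD K q (sg K (.S w⁻¹))
  val_inv := by
    rw [← map_mul, mk_rel K q (SRel.Smul w w⁻¹), mul_inv_cancel,
      mk_rel K q SRel.Sone, map_one]
  inv_val := by
    rw [← map_mul, mk_rel K q (SRel.Smul w⁻¹ w), inv_mul_cancel,
      mk_rel K q SRel.Sone, map_one]

/-- `w ↦ s_w` as a monoid hom into units. -/
def W : Equiv.Perm (Fin N) →* (SmashD K N q)ˣ where
  toFun := W0 K q
  map_one' := by ext; exact (mk_rel K q SRel.Sone).trans (map_one _)
  map_mul' w w' := by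
    ext
    show mkD K q (sg K (.S (w * w'))) = mkD K q (sg K (.S w)) * mkD K q (sg K (.S w'))
    rw [← map_mul, mk_rel K q (SRel.Smul w w')]

/-- scalar units. -/
def qU : Kˣ →* (SmashD K N q)ˣ :=
  Units.map (algebraMap K (SmashD K N q) : K →* SmashD K N q)

lemma qU_central (c : Kˣ) (x : (SmashD K N q)ˣ) : Commute (qU K q c) x := by
  ext
  exact (Algebra.commutes (c : K) (x : SmashD K N q))

lemma UU (i j : Fin N) : Commute (U K q i) (U K q j) := by
  ext
  exact (by rw [← map_mul, mk_rel K q (SRel.XX i j), map_mul] :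
    (mkD K q (sg K (.X i)) * mkD K q (sg K (.X j)) = _))

lemma VV (i j : Fin N) : Commute (V K q i) (V K q j) := by
  ext
  exact (by rw [← map_mul, mk_rel K q (SRel.YY i j), map_mul] :
    (mkD K q (sg K (.Y i)) * mkD K q (sg K (.Y j)) = _))

lemma VU_ne {i j : Fin N} (h : i ≠ j) : Commute (V K q i) (U K q j) := by
  ext
  exact (by rw [← map_mul, mk_rel K q (SRel.YXne i j h), map_mul] :
    (mkD K q (sg K (.Y i)) * mkD K q (sg K (.X j)) = _))

lemma VU_eq (i : Fin N) : V K q i * U K q i = qU K q q * (U K q i * V K q i) := by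
  ext
  show mkD K q (sg K (.Y i)) * mkD K q (sg K (.X i)) = _
  rw [← map_mul, mk_rel K q (SRel.YXeq i), map_smul]
  show _ = algebraMap K _ (q : K) * _
  rw [Algebra.smul_def, map_mul]; rfl

lemma WU (w : Equiv.Perm (Fin N)) (i : Fin N) :
    W K q w * U K q i = U K q (w i) * W K q w := by
  ext
  show mkD K q (sg K (.S w)) * mkD K q (sg K (.X i)) = _
  rw [← map_mul, mk_rel K q (SRel.SX w i), map_mul]; rfl

lemma WV (w : Equiv.Perm (Fin N)) (i : Fin N) :
    W K q w * V K q i = V K q (w i) * W K q w := by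
  ext
  show mkD K q (sg K (.S w)) * mkD K q (sg K (.Y i)) = _
  rw [← map_mul, mk_rel K q (SRel.SY w i), map_mul]; rfl

end S11
namespace S11

variable (K : Type) [Field K] {N : ℕ} (q : Kˣ)

/-- The subgroup generated by the `X_i`. -/
def A : Subgroup (SmashD K N q)ˣ := Subgroup.closure (Set.range (U K q))

instance : CommGroup (A K q (N := N)) :=
  Subgroup.closureCommGroupOfComm (by
    rintro x ⟨i, rfl⟩ y ⟨j, rfl⟩
    exact UU K q i j)

def Ub (i : Fin N) : A K q (N := N) :=
  ⟨U K q i, Subgroup.subset_closure ⟨i, rfl⟩⟩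

/-- The monomial `X^a` for `a : Fin N →₀ ℤ`. -/
def Xp (a : Fin N →₀ ℤ) : (SmashD K N q)ˣ :=
  ((∏ j : Fin N, Ub K q j ^ a j : A K q (N := N)) : (SmashD K N q)ˣ)

lemma Xp_zero : Xp K q (0 : Fin N →₀ ℤ) = 1 := by
  simp [Xp]

lemma Xp_add (a b : Fin N →₀ ℤ) : Xp K q (a + b) = Xp K q a * Xp K q b := by
  have : (∏ j : Fin N, Ub K q j ^ (a + b) j : A K q (N := N))
      = (∏ j : Fin N, Ub K q j ^ a j) * ∏ j : Fin N, Ub K q j ^ b j := by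
    refine Eq.trans ?_ Finset.prod_mul_distrib
    exact Finset.prod_congr rfl fun j _ => by
      rw [Finsupp.add_apply, zpow_add]; rfl
  simpa [Xp] using congrArg (Subtype.val) this

lemma Xp_single (i : Fin N) (n : ℤ) : Xp K q (Finsupp.single i n) = U K q i ^ n := by
  have : (∏ j : Fin N, Ub K q j ^ (Finsupp.single i n) j : A K q (N := N)) = Ub K q i ^ n := by
    rw [Finset.prod_eq_single i]
    · rw [Finsupp.single_eq_same]
    · intro j _ hj
      rw [Finsupp.single_eq_of_ne' (Ne.symm hj), zpow_zero]; rfl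
    · exact fun h => absurd (Finset.mem_univ i) h
  have h2 := congrArg Subtype.val this
  simpa [Xp, Ub] using h2

lemma Xp_single_add (i : Fin N) (n : ℤ) (a : Fin N →₀ ℤ) :
    Xp K q (Finsupp.single i n + a) = U K q i ^ n * Xp K q a := by
  rw [Xp_add, Xp_single]

/-- `Y_i` skew-commutes with powers of `X_j`. -/
lemma VUzpow (i j : Fin N) (n : ℤ) :
    V K q i * U K q j ^ n
      = qU K q (q ^ (if i = j then n else 0)) * (U K q j ^ n * V K q i) := by
  by_cases h : i = j
  · subst h
    have hsc : SemiconjBy (V K q i) (U K q i) (qU K q q * U K q i) := by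
      unfold SemiconjBy
      rw [VU_eq, ← mul_assoc]
    have h2 := hsc.zpow_right n
    rw [SemiconjBy] at h2
    rw [if_pos rfl, h2, (qU_central K q _ _).mul_zpow, map_zpow, mul_assoc]
  · simp only [if_neg h, zpow_zero, map_one, one_mul]
    exact ((VU_ne K q h).zpow_right n).eq

lemma VXp (i : Fin N) (a : Fin N →₀ ℤ) :
    V K q i * Xp K q a = qU K q (q ^ a i) * (Xp K q a * V K q i) := by
  induction a using Finsupp.induction with
  | zero => simp [Xp_zero]
  | single_add j n f hfj hn ih =>
      have hswap : (if i = j then n else 0) + f i = (Finsupp.single j n + f) i := by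
        rw [Finsupp.add_apply, Finsupp.single_apply]
        by_cases h : i = j <;> simp [h, eq_comm]
      calc V K q i * Xp K q (Finsupp.single j n + f)
          = V K q i * U K q j ^ n * Xp K q f := by rw [Xp_single_add, mul_assoc]
        _ = qU K q (q ^ (if i = j then n else 0)) * (U K q j ^ n * (V K q i * Xp K q f)) := by
            rw [VUzpow, mul_assoc, mul_assoc]
        _ = qU K q (q ^ (if i = j then n else 0))
              * (U K q j ^ n * (qU K q (q ^ f i) * (Xp K q f * V K q i))) := by rw [ih]
        _ = qU K q (q ^ (if i = j then n else 0))
              * (qU K q (q ^ f i) * (U K q j ^ n * (Xp K q f * V K q i))) := by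
            rw [← mul_assoc (U K q j ^ n), ← (qU_central K q (q ^ f i) (U K q j ^ n)).eq,
              mul_assoc]
        _ = qU K q (q ^ ((Finsupp.single j n + f) i))
              * (Xp K q (Finsupp.single j n + f) * V K q i) := by
            rw [← mul_assoc, ← map_mul, ← zpow_add, hswap, Xp_single_add, mul_assoc]

end S11
namespace S11

variable (K : Type) [Field K] {N : ℕ} (q : Kˣ)

lemma VinvXp (i : Fin N) (a : Fin N →₀ ℤ) :
    (V K q i)⁻¹ * Xp K q a = qU K q ((q ^ a i)⁻¹) * (Xp K q a * (V K q i)⁻¹) := by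
  have h : SemiconjBy (V K q i) (Xp K q a) (qU K q (q ^ a i) * Xp K q a) := by
    unfold SemiconjBy; rw [VXp, ← mul_assoc]
  have h2 := h.inv_symm_left
  unfold SemiconjBy at h2
  rw [← mul_assoc, ← (qU_central K q _ ((V K q i)⁻¹)).eq, mul_assoc] at h2
  rw [map_inv, eq_inv_mul_iff_mul_eq]
  exact h2

lemma WVinv (w : Equiv.Perm (Fin N)) (i : Fin N) :
    W K q w * (V K q i)⁻¹ = (V K q (w i))⁻¹ * W K q w := by
  have h := congrArg (fun x => (V K q (w i))⁻¹ * x * (V K q i)⁻¹) (WV K q w i)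
  simpa [mul_assoc] using h.symm

/-- The permutation action on exponents. -/
def pa (w : Equiv.Perm (Fin N)) (a : Fin N →₀ ℤ) : Fin N →₀ ℤ :=
  Finsupp.equivMapDomain w a

lemma pa_apply (w : Equiv.Perm (Fin N)) (a : Fin N →₀ ℤ) (i : Fin N) :
    pa w a i = a (w⁻¹ i) := rfl

lemma conj_U (w : Equiv.Perm (Fin N)) (i : Fin N) :
    (MulAut.conj (W K q w)) (U K q i) = U K q (w i) := by
  rw [MulAut.conj_apply, WU, mul_assoc, mul_inv_cancel, mul_one]

lemma conj_mem (w : Equiv.Perm (Fin N)) :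
    ∀ x ∈ A K q (N := N), (MulAut.conj (W K q w)) x ∈ A K q (N := N) := by
  intro x hx
  have hle : (A K q (N := N)).map (MulAut.conj (W K q w)).toMonoidHom
      ≤ A K q (N := N) := by
    rw [A, MonoidHom.map_closure, Subgroup.closure_le]
    rintro y ⟨z, ⟨i, rfl⟩, rfl⟩
    exact Subgroup.subset_closure ⟨w i, (conj_U K q w i).symm⟩
  exact hle ⟨x, hx, rfl⟩

/-- The conjugation by `s_w` restricted to `A`. -/
def cw (w : Equiv.Perm (Fin N)) : A K q (N := N) →* A K q (N := N) :=
  ((MulAut.conj (W K q w)).toMonoidHom.comp (A K q (N := N)).subtype).codRestrict _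
    (fun x => conj_mem K q w x.1 x.2)

lemma cw_Ub (w : Equiv.Perm (Fin N)) (i : Fin N) :
    cw K q w (Ub K q i) = Ub K q (w i) := by
  ext
  exact congrArg Units.val (conj_U K q w i)

lemma WXp (w : Equiv.Perm (Fin N)) (a : Fin N →₀ ℤ) :
    W K q w * Xp K q a = Xp K q (pa w a) * W K q w := by
  have key : cw K q w (∏ j : Fin N, Ub K q j ^ a j) = ∏ j : Fin N, Ub K q j ^ pa w a j := by
    rw [map_prod]
    have h1 : ∀ j : Fin N, cw K q w (Ub K q j ^ a j) = Ub K q (w j) ^ pa w a (w j) := by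
      intro j
      rw [map_zpow, cw_Ub]
      congr 1
      rw [pa_apply]
      congr 1
      exact (Equiv.symm_apply_apply w j).symm
    rw [Finset.prod_congr rfl fun j _ => h1 j]
    exact Equiv.prod_comp w (fun k => Ub K q k ^ pa w a k)
  have key2 : (MulAut.conj (W K q w)) (Xp K q a) = Xp K q (pa w a) :=
    congrArg Subtype.val key
  rw [MulAut.conj_apply] at key2
  calc W K q w * Xp K q a
      = (W K q w * Xp K q a * (W K q w)⁻¹) * W K q w := by
        rw [mul_assoc, inv_mul_cancel, mul_one]
    _ = Xp K q (pa w a) * W K q w := by rw [key2]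

end S11
namespace S11

variable (K : Type) [Field K] {N : ℕ} (q : Kˣ)

/-- Index of the basis of the standard module. -/
abbrev P (N : ℕ) := (Fin N →₀ ℤ) × Equiv.Perm (Fin N)

/-- The standard module: a vector space with basis indexed by `P N`. -/
abbrev M (K : Type) [Field K] (N : ℕ) := P N →₀ K

/-- basic building block for endomorphisms of `M`. -/
def gen (F : P N → K) (t : P N → P N) : M K N →ₗ[K] M K N :=
  Finsupp.lsum K (fun p => F p • Finsupp.lsingle (t p))

lemma gen_single (F : P N → K) (t : P N → P N) (p : P N) (c : K) :
    gen K F t (Finsupp.single p c) = Finsupp.single (t p) (F p * c) := by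
  rw [gen, Finsupp.lsum_single, LinearMap.smul_apply, Finsupp.lsingle_apply,
    Finsupp.smul_single, smul_eq_mul]

/-- The actions of the generators on `M`. -/
def ρgen : SGen N → Module.End K (M K N)
  | .X i => gen K (fun _ => 1) (fun p => (Finsupp.single i 1 + p.1, p.2))
  | .Xinv i => gen K (fun _ => 1) (fun p => (Finsupp.single i (-1) + p.1, p.2))
  | .Y i => gen K (fun p => ((q ^ p.1 i : Kˣ) : K)) id
  | .Yinv i => gen K (fun p => (((q ^ p.1 i)⁻¹ : Kˣ) : K)) id
  | .S w => gen K (fun _ => 1) (fun p => (pa w p.1, w * p.2))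

lemma pa_add (w : Equiv.Perm (Fin N)) (a b : Fin N →₀ ℤ) :
    pa w (a + b) = pa w a + pa w b := by
  ext i; simp [pa_apply]

lemma pa_single (w : Equiv.Perm (Fin N)) (i : Fin N) (n : ℤ) :
    pa w (Finsupp.single i n) = Finsupp.single (w i) n := by
  exact Finsupp.equivMapDomain_single w i n

lemma pa_pa (w w' : Equiv.Perm (Fin N)) (a : Fin N →₀ ℤ) :
    pa w (pa w' a) = pa (w * w') a := by
  ext i; simp [pa_apply]

lemma pa_one (a : Fin N →₀ ℤ) : pa (1 : Equiv.Perm (Fin N)) a = a := by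
  ext i; simp [pa_apply]

lemma hrel : ∀ ⦃x y : FreeAlgebra K (SGen N)⦄, SRel K N q x y →
    FreeAlgebra.lift K (ρgen K q) x = FreeAlgebra.lift K (ρgen K q) y := by
  intro x y h
  have core : ∀ g g' : SGen N, ∀ z,
      FreeAlgebra.lift K (ρgen K q) (sg K g * sg K g') z
        = ρgen K q g (ρgen K q g' z) := by
    intro g g' z
    simp [sg, Module.End.mul_apply]
  induction h with
  | XX i j =>
      apply Finsupp.lhom_ext
      rintro ⟨a, w⟩ c
      rw [core, core]
      simp only [ρgen, gen_single, one_mul]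
      rw [add_left_comm]
  | XXinv i =>
      apply Finsupp.lhom_ext
      rintro ⟨a, w⟩ c
      rw [core, map_one, Module.End.one_apply]
      simp only [ρgen, gen_single, one_mul]
      congr 1
      rw [← add_assoc, ← Finsupp.single_add]
      norm_num
  | XinvX i =>
      apply Finsupp.lhom_ext
      rintro ⟨a, w⟩ c
      rw [core, map_one, Module.End.one_apply]
      simp only [ρgen, gen_single, one_mul]
      congr 1
      rw [← add_assoc, ← Finsupp.single_add]
      norm_num
  | YY i j =>
      apply Finsupp.lhom_ext
      rintro ⟨a, w⟩ c
      rw [core, core]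
      simp only [ρgen, gen_single, id_eq]
      congr 1
      ring
  | YYinv i =>
      apply Finsupp.lhom_ext
      rintro ⟨a, w⟩ c
      rw [core, map_one, Module.End.one_apply]
      simp only [ρgen, gen_single, id_eq]
      congr 1
      rw [← mul_assoc, ← Units.val_mul, mul_inv_cancel, Units.val_one, one_mul]
  | YinvY i =>
      apply Finsupp.lhom_ext
      rintro ⟨a, w⟩ c
      rw [core, map_one, Module.End.one_apply]
      simp only [ρgen, gen_single, id_eq]
      congr 1
      rw [← mul_assoc, ← Units.val_mul, inv_mul_cancel, Units.val_one, one_mul]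
  | YXne i j hij =>
      apply Finsupp.lhom_ext
      rintro ⟨a, w⟩ c
      rw [core, core]
      simp only [ρgen, gen_single, id_eq, one_mul]
      congr 2
      rw [Finsupp.add_apply, Finsupp.single_apply, if_neg (Ne.symm hij), zero_add]
  | YXeq i =>
      apply Finsupp.lhom_ext
      rintro ⟨a, w⟩ c
      rw [core, map_smul, LinearMap.smul_apply, core]
      simp only [ρgen, gen_single, id_eq, one_mul, Finsupp.smul_single, smul_eq_mul]
      congr 1
      rw [Finsupp.add_apply, Finsupp.single_eq_same, zpow_add, zpow_one]
      push_cast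
      ring
  | Smul w w' =>
      apply Finsupp.lhom_ext
      rintro ⟨a, w₀⟩ c
      rw [core]
      have : FreeAlgebra.lift K (ρgen K q) (sg K (SGen.S (w * w') : SGen N))
          = ρgen K q (SGen.S (w * w')) := by simp [sg]
      rw [this]
      simp only [ρgen, gen_single, one_mul]
      rw [pa_pa, mul_assoc]
  | Sone =>
      apply Finsupp.lhom_ext
      rintro ⟨a, w₀⟩ c
      have : FreeAlgebra.lift K (ρgen K q) (sg K (SGen.S 1 : SGen N)) = ρgen K q (SGen.S 1) := by simp [sg]
      rw [this, map_one, Module.End.one_apply]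
      simp only [ρgen, gen_single, one_mul]
      try rw [pa_one]
  | SX w i =>
      apply Finsupp.lhom_ext
      rintro ⟨a, w₀⟩ c
      rw [core, core]
      simp only [ρgen, gen_single, one_mul]
      rw [pa_add, pa_single]
  | SY w i =>
      apply Finsupp.lhom_ext
      rintro ⟨a, w₀⟩ c
      rw [core, core]
      simp only [ρgen, gen_single, id_eq, one_mul]
      congr 2
      rw [pa_apply, show w⁻¹ (w i) = i from w.symm_apply_apply i]

/-- The representation of `D` on `M`. -/
def ρ : SmashD K N q →ₐ[K] Module.End K (M K N) :=
  RingQuot.liftAlgHom K ⟨FreeAlgebra.lift K (ρgen K q), hrel K q⟩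

lemma ρ_mk (x : FreeAlgebra K (SGen N)) :
    ρ K q (mkD K q x) = FreeAlgebra.lift K (ρgen K q) x := by
  rw [ρ, mkD, RingQuot.liftAlgHom_mkAlgHom_apply]

lemma ρ_gen (g : SGen N) : ρ K q (mkD K q (sg K g)) = ρgen K q g := by
  rw [ρ_mk, sg, FreeAlgebra.lift_ι_apply]

end S11
namespace S11

variable (K : Type) [Field K] {N : ℕ} (q : Kˣ)

instance instModuleD : Module (SmashD K N q) (M K N) :=
  Module.compHom _ (ρ K q).toRingHom

lemma dsmul_def (d : SmashD K N q) (m : M K N) : d • m = ρ K q d m := rfl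

instance : IsScalarTower K (SmashD K N q) (M K N) :=
  ⟨fun k d m => by
    rw [dsmul_def, dsmul_def, map_smul, LinearMap.smul_apply]⟩

instance : SMulCommClass (SmashD K N q) K (M K N) :=
  ⟨fun d k m => by rw [dsmul_def, dsmul_def, map_smul]⟩

/-- The basis monomial `X^a s_w` of `D`. -/
def bas (p : P N) : SmashD K N q := (Xp K q p.1 : SmashD K N q) * (W K q p.2 : SmashD K N q)

/-- The comparison map from `M` to `D ⧸ I`. -/
def σl : M K N →ₗ[K] (SmashD K N q ⧸ unipIdeal K N q) :=
  Finsupp.lsum K (fun p =>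
    LinearMap.toSpanSingleton K _ (Submodule.Quotient.mk (bas K q p)))

lemma σl_single (p : P N) (c : K) :
    σl K q (Finsupp.single p c) = c • Submodule.Quotient.mk (bas K q p) := by
  rw [σl, Finsupp.lsum_single, LinearMap.toSpanSingleton_apply]

lemma mk_mul_smul (d e : SmashD K N q) :
    (Submodule.Quotient.mk (d * e) : SmashD K N q ⧸ unipIdeal K N q)
      = d • Submodule.Quotient.mk e := by
  rw [← Submodule.Quotient.mk_smul, smul_eq_mul]

lemma mk_alg_smul (c : K) (e : SmashD K N q) :
    (Submodule.Quotient.mk (algebraMap K (SmashD K N q) c * e) :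
        SmashD K N q ⧸ unipIdeal K N q)
      = c • Submodule.Quotient.mk e := by
  rw [← Algebra.smul_def, ← Submodule.Quotient.mk_smul]

lemma mk_V_right (e : SmashD K N q) (j : Fin N) :
    (Submodule.Quotient.mk (e * (V K q j : SmashD K N q)) :
        SmashD K N q ⧸ unipIdeal K N q) = Submodule.Quotient.mk e := by
  rw [Submodule.Quotient.eq]
  have : e * (V K q j : SmashD K N q) - e = e • (Ye K q j - 1) := by
    rw [smul_eq_mul, mul_sub, mul_one]; rfl
  rw [this]
  exact Submodule.smul_mem _ e (Submodule.subset_span (Or.inl ⟨j, rfl⟩))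

lemma mk_Vinv_right (e : SmashD K N q) (j : Fin N) :
    (Submodule.Quotient.mk (e * ((V K q j)⁻¹ : (SmashD K N q)ˣ)) :
        SmashD K N q ⧸ unipIdeal K N q) = Submodule.Quotient.mk e := by
  rw [Submodule.Quotient.eq]
  have : e * (((V K q j)⁻¹ : (SmashD K N q)ˣ) : SmashD K N q) - e
      = e • (YeInv K q j - 1) := by
    rw [smul_eq_mul, mul_sub, mul_one]; rfl
  rw [this]
  exact Submodule.smul_mem _ e (Submodule.subset_span (Or.inr ⟨j, rfl⟩))

/-- commuting `Y_i` past `s_w`. -/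
lemma VW (i : Fin N) (w : Equiv.Perm (Fin N)) :
    V K q i * W K q w = W K q w * V K q (w⁻¹ i) := by
  have h := WV K q w (w⁻¹ i)
  rw [show w (w⁻¹ i) = i from w.apply_symm_apply i] at h
  exact h.symm

lemma VinvW (i : Fin N) (w : Equiv.Perm (Fin N)) :
    (V K q i)⁻¹ * W K q w = W K q w * (V K q (w⁻¹ i))⁻¹ := by
  have h := WVinv K q w (w⁻¹ i)
  rw [show w (w⁻¹ i) = i from w.apply_symm_apply i] at h
  exact h.symm

lemma VbasU (i : Fin N) (a : Fin N →₀ ℤ) (w : Equiv.Perm (Fin N)) :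
    V K q i * (Xp K q a * W K q w)
      = qU K q (q ^ a i) * (Xp K q a * W K q w * V K q (w⁻¹ i)) := by
  rw [← mul_assoc, VXp, mul_assoc, mul_assoc, VW, mul_assoc]

lemma VinvbasU (i : Fin N) (a : Fin N →₀ ℤ) (w : Equiv.Perm (Fin N)) :
    (V K q i)⁻¹ * (Xp K q a * W K q w)
      = qU K q ((q ^ a i)⁻¹) * (Xp K q a * W K q w * (V K q (w⁻¹ i))⁻¹) := by
  rw [← mul_assoc, VinvXp, mul_assoc, mul_assoc, VinvW, mul_assoc]

lemma WbasU (v : Equiv.Perm (Fin N)) (a : Fin N →₀ ℤ) (w : Equiv.Perm (Fin N)) :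
    W K q v * (Xp K q a * W K q w) = Xp K q (pa v a) * W K q (v * w) := by
  rw [← mul_assoc, WXp, mul_assoc, ← map_mul]

lemma mk_qU_smul (u : Kˣ) (e : SmashD K N q) :
    (Submodule.Quotient.mk (((qU K q u : (SmashD K N q)ˣ) : SmashD K N q) * e) :
        SmashD K N q ⧸ unipIdeal K N q)
      = (u : K) • Submodule.Quotient.mk e :=
  mk_alg_smul K q (u : K) e

lemma smul_juggle (x c : K) (b : SmashD K N q) :
    (x * c) • (Submodule.Quotient.mk b : SmashD K N q ⧸ unipIdeal K N q)
      = c • x • Submodule.Quotient.mk b := by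
  rw [← Submodule.Quotient.mk_smul, ← Submodule.Quotient.mk_smul,
    ← Submodule.Quotient.mk_smul]
  congr 1
  rw [mul_smul]
  exact smul_comm x c b

lemma gen_key (g : SGen N) (p : P N) (c : K) :
    σl K q (mkD K q (sg K g) • Finsupp.single p c)
      = mkD K q (sg K g) • σl K q (Finsupp.single p c) := by
  obtain ⟨a, w⟩ := p
  rw [dsmul_def, ρ_gen, σl_single]
  have base : ∀ d : SmashD K N q,
      mkD K q (sg K g) • c • (Submodule.Quotient.mk d : SmashD K N q ⧸ unipIdeal K N q)
        = c • Submodule.Quotient.mk (mkD K q (sg K g) * d) := by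
    intro d
    calc mkD K q (sg K g) • c • (Submodule.Quotient.mk d :
            SmashD K N q ⧸ unipIdeal K N q)
        = mkD K q (sg K g) • Submodule.Quotient.mk (c • d) := by
          rw [Submodule.Quotient.mk_smul]
      _ = Submodule.Quotient.mk (mkD K q (sg K g) * (c • d)) := by rw [mk_mul_smul]
      _ = Submodule.Quotient.mk (c • (mkD K q (sg K g) * d)) := by rw [mul_smul_comm]
      _ = c • Submodule.Quotient.mk (mkD K q (sg K g) * d) := by
          rw [Submodule.Quotient.mk_smul]
  rw [base]
  cases g with
  | X i =>
      rw [ρgen, gen_single, one_mul, σl_single]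
      congr 2
      show (Xp K q (Finsupp.single i 1 + a) : SmashD K N q) * _ = _
      rw [Xp_single_add, zpow_one, Units.val_mul, mul_assoc]
      rfl
  | Xinv i =>
      rw [ρgen, gen_single, one_mul, σl_single]
      congr 2
      show (Xp K q (Finsupp.single i (-1) + a) : SmashD K N q) * _ = _
      rw [Xp_single_add, zpow_neg_one, Units.val_mul, mul_assoc]
      rfl
  | Y i =>
      rw [ρgen, gen_single, σl_single, id_eq]
      have hd : mkD K q (sg K (.Y i)) * bas K q (a, w)
          = ((qU K q (q ^ a i) : (SmashD K N q)ˣ) : SmashD K N q)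
              * (bas K q (a, w) * (V K q (w⁻¹ i) : SmashD K N q)) := by
        show (V K q i : SmashD K N q) * _ = _
        have h := congrArg Units.val (VbasU K q i a w)
        simpa only [Units.val_mul, mul_assoc, bas] using h
      rw [hd, mk_qU_smul, mk_V_right, smul_juggle]
  | Yinv i =>
      rw [ρgen, gen_single, σl_single, id_eq]
      have hd : mkD K q (sg K (.Yinv i)) * bas K q (a, w)
          = ((qU K q ((q ^ a i)⁻¹) : (SmashD K N q)ˣ) : SmashD K N q)
              * (bas K q (a, w)
                  * (((V K q (w⁻¹ i))⁻¹ : (SmashD K N q)ˣ) : SmashD K N q)) := by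
        show (((V K q i)⁻¹ : (SmashD K N q)ˣ) : SmashD K N q) * _ = _
        have h := congrArg Units.val (VinvbasU K q i a w)
        simpa only [Units.val_mul, mul_assoc, bas] using h
      rw [hd, mk_qU_smul, mk_Vinv_right, smul_juggle]
  | S v =>
      rw [ρgen, gen_single, one_mul, σl_single]
      congr 2
      have h := congrArg Units.val (WbasU K q v a w)
      show bas K q (pa v a, v * w) = (W K q v : SmashD K N q) * bas K q (a, w)
      simpa [Units.val_mul, bas, mul_assoc] using h.symm

end S11
namespace S11

variable (K : Type) [Field K] {N : ℕ} (q : Kˣ)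

lemma sigma_dsmul (d : SmashD K N q) (m : M K N) :
    σl K q (d • m) = d • σl K q m := by
  have main : ∀ x : FreeAlgebra K (SGen N), ∀ m : M K N,
      σl K q (mkD K q x • m) = mkD K q x • σl K q m := by
    intro x
    induction x using FreeAlgebra.induction with
    | grade0 r =>
        intro m
        rw [AlgHom.commutes, algebraMap_smul, map_smul, algebraMap_smul]
    | grade1 g =>
        intro m
        induction m using Finsupp.induction_linear with
        | zero => simp
        | add m1 m2 h1 h2 => rw [smul_add, map_add, h1, h2, map_add, smul_add]
        | single p c => exact gen_key K q g p c
    | mul x y hx hy =>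
        intro m
        rw [map_mul, mul_smul, hx, hy, mul_smul]
    | add x y hx hy =>
        intro m
        rw [map_add, add_smul, map_add, hx, hy, add_smul]
  obtain ⟨x, rfl⟩ := RingQuot.mkAlgHom_surjective K (SRel K N q) d
  exact main x m

/-- `σl` as a `D`-linear map. -/
def σD : M K N →ₗ[SmashD K N q] (SmashD K N q ⧸ unipIdeal K N q) where
  toFun := σl K q
  map_add' := map_add _
  map_smul' := sigma_dsmul K q

/-- The cyclic vector of `M`. -/
def m₀ : M K N := Finsupp.single (0, 1) 1

/-- The evaluation map `D → M`. -/
def π₀ : SmashD K N q →ₗ[SmashD K N q] M K N :=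
  LinearMap.toSpanSingleton (SmashD K N q) (M K N) (m₀ K)

lemma rho_Y_m₀ (i : Fin N) : Ye K q i • (m₀ K (N := N)) = m₀ K := by
  show ρ K q (mkD K q (sg K (.Y i))) (m₀ K) = m₀ K
  rw [ρ_gen, m₀, ρgen, gen_single, id_eq]
  norm_num

lemma rho_Yinv_m₀ (i : Fin N) : YeInv K q i • (m₀ K (N := N)) = m₀ K := by
  show ρ K q (mkD K q (sg K (.Yinv i))) (m₀ K) = m₀ K
  rw [ρ_gen, m₀, ρgen, gen_single, id_eq]
  norm_num

lemma unip_le_ker : unipIdeal K N q ≤ LinearMap.ker (π₀ K q (N := N)) := by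
  rw [unipIdeal, Submodule.span_le]
  rintro x (⟨i, rfl⟩ | ⟨i, rfl⟩) <;>
    simp only [SetLike.mem_coe, LinearMap.mem_ker, π₀, LinearMap.toSpanSingleton_apply,
      sub_smul, one_smul, rho_Y_m₀, rho_Yinv_m₀, sub_self]

/-- The induced map `D ⧸ I → M`. -/
def πD : (SmashD K N q ⧸ unipIdeal K N q) →ₗ[SmashD K N q] M K N :=
  Submodule.liftQ _ (π₀ K q) (unip_le_ker K q)

lemma πD_mk (d : SmashD K N q) :
    πD K q (Submodule.Quotient.mk d) = d • m₀ K := rfl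

lemma rho_U_zpow (j : Fin N) (n : ℤ) :
    ∀ (b : Fin N →₀ ℤ) (w : Equiv.Perm (Fin N)) (c : K),
    ρ K q ((U K q j ^ n : (SmashD K N q)ˣ) : SmashD K N q) (Finsupp.single (b, w) c)
      = Finsupp.single (Finsupp.single j n + b, w) c := by
  have hU : ∀ (b : Fin N →₀ ℤ) (w : Equiv.Perm (Fin N)) (c : K),
      ρ K q ((U K q j : (SmashD K N q)ˣ) : SmashD K N q) (Finsupp.single (b, w) c)
        = Finsupp.single (Finsupp.single j 1 + b, w) c := by
    intro b w c
    show ρ K q (mkD K q (sg K (.X j))) _ = _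
    rw [ρ_gen, ρgen, gen_single, one_mul]
  have hUinv : ∀ (b : Fin N →₀ ℤ) (w : Equiv.Perm (Fin N)) (c : K),
      ρ K q (((U K q j)⁻¹ : (SmashD K N q)ˣ) : SmashD K N q) (Finsupp.single (b, w) c)
        = Finsupp.single (Finsupp.single j (-1) + b, w) c := by
    intro b w c
    show ρ K q (mkD K q (sg K (.Xinv j))) _ = _
    rw [ρ_gen, ρgen, gen_single, one_mul]
  induction n using Int.induction_on with
  | zero => intro b w c; simp
  | succ n ih =>
      intro b w c
      rw [zpow_add_one, Units.val_mul, map_mul, Module.End.mul_apply, hU, ih]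
      have h3 : Finsupp.single j (n : ℤ) + (Finsupp.single j (1 : ℤ) + b)
          = Finsupp.single j ((n : ℤ) + 1) + b := by
        rw [← add_assoc, ← Finsupp.single_add]
      rw [h3]
  | pred n ih =>
      intro b w c
      rw [zpow_sub_one, Units.val_mul, map_mul, Module.End.mul_apply, hUinv, ih]
      have h3 : Finsupp.single j (-(n : ℤ)) + (Finsupp.single j (-1 : ℤ) + b)
          = Finsupp.single j (-(n : ℤ) - 1) + b := by
        rw [← add_assoc, ← Finsupp.single_add]
        norm_num [sub_eq_add_neg]
      rw [h3]

lemma rho_Xp (a b : Fin N →₀ ℤ) (w : Equiv.Perm (Fin N)) (c : K) :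
    ρ K q ((Xp K q a : (SmashD K N q)ˣ) : SmashD K N q) (Finsupp.single (b, w) c)
      = Finsupp.single (a + b, w) c := by
  induction a using Finsupp.induction with
  | zero => rw [Xp_zero, Units.val_one, map_one, Module.End.one_apply, zero_add]
  | single_add j n f hfj hn ih =>
      rw [Xp_single_add, Units.val_mul, map_mul, Module.End.mul_apply, ih, rho_U_zpow,
        add_assoc]

lemma rho_bas (p : P N) : ρ K q (bas K q p) (m₀ K) = Finsupp.single p 1 := by
  obtain ⟨a, w⟩ := p
  rw [bas, map_mul, Module.End.mul_apply]
  have hW : ρ K q ((W K q w : (SmashD K N q)ˣ) : SmashD K N q) (m₀ K (N := N))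
      = Finsupp.single (0, w) 1 := by
    show ρ K q (mkD K q (sg K (.S w))) _ = _
    rw [ρ_gen, m₀, ρgen, gen_single, one_mul]
    have hp : (pa w (0 : Fin N →₀ ℤ), w * 1) = ((0 : Fin N →₀ ℤ), w) := by
      simp [pa]
    rw [hp]
  rw [hW, rho_Xp, add_zero]

lemma pi_sigma (m : M K N) : πD K q (σD K q m) = m := by
  induction m using Finsupp.induction_linear with
  | zero => rw [map_zero, map_zero]
  | add m1 m2 h1 h2 => rw [map_add, map_add, h1, h2]
  | single p c =>
      show πD K q (σl K q (Finsupp.single p c)) = _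
      rw [σl_single, ← Submodule.Quotient.mk_smul, πD_mk]
      show ρ K q (c • bas K q p) (m₀ K) = _
      rw [map_smul, LinearMap.smul_apply, rho_bas, Finsupp.smul_single, smul_eq_mul, mul_one]

lemma sigma_pi (y : SmashD K N q ⧸ unipIdeal K N q) : σD K q (πD K q y) = y := by
  obtain ⟨d, rfl⟩ := Submodule.Quotient.mk_surjective _ y
  rw [πD_mk]
  show σl K q (d • m₀ K) = _
  rw [sigma_dsmul]
  have h0 : σl K q (m₀ K (N := N)) = Submodule.Quotient.mk 1 := by
    rw [m₀, σl_single, ← Submodule.Quotient.mk_smul, one_smul]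
    congr 1
    rw [bas]
    show ((Xp K q 0 : (SmashD K N q)ˣ) : SmashD K N q) * ((W K q 1 : (SmashD K N q)ˣ) : _) = 1
    rw [Xp_zero, map_one, Units.val_one, one_mul]
  rw [h0, ← mk_mul_smul, mul_one]

/-- The `D`-linear equivalence between `D ⧸ I` and the standard module `M`. -/
def eqv : (SmashD K N q ⧸ unipIdeal K N q) ≃ₗ[SmashD K N q] M K N :=
  LinearEquiv.ofLinear (πD K q) (σD K q)
    (LinearMap.ext (pi_sigma K q)) (LinearMap.ext (sigma_pi K q))

end S11
namespace S11

variable (K : Type) [Field K] {N : ℕ} (q : Kˣ)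

/-- Right translation by `w` (underlying linear map). -/
def Tl (w : Equiv.Perm (Fin N)) : M K N →ₗ[K] M K N :=
  gen K (fun _ => 1) (fun p => (p.1, p.2 * w))

lemma Tl_single (w : Equiv.Perm (Fin N)) (p : P N) (c : K) :
    Tl K w (Finsupp.single p c) = Finsupp.single (p.1, p.2 * w) c := by
  rw [Tl, gen_single, one_mul]

lemma Tl_dsmul (w : Equiv.Perm (Fin N)) (d : SmashD K N q) (m : M K N) :
    Tl K w (d • m) = d • Tl K w m := by
  have main : ∀ x : FreeAlgebra K (SGen N), ∀ m : M K N,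
      Tl K w (mkD K q x • m) = mkD K q x • Tl K w m := by
    intro x
    induction x using FreeAlgebra.induction with
    | grade0 r =>
        intro m
        rw [AlgHom.commutes, algebraMap_smul, map_smul, algebraMap_smul]
    | grade1 g =>
        intro m
        induction m using Finsupp.induction_linear with
        | zero => simp
        | add m1 m2 h1 h2 => rw [smul_add, map_add, h1, h2, map_add, smul_add]
        | single p c =>
            obtain ⟨a, v⟩ := p
            rw [dsmul_def, dsmul_def]
            have hsg : FreeAlgebra.ι K g = sg K g := rfl
            rw [hsg, ρ_gen]
            cases g <;>
              simp only [ρgen, gen_single, Tl_single, one_mul, id_eq, mul_assoc]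
    | mul x y hx hy =>
        intro m
        rw [map_mul, mul_smul, hx, hy, mul_smul]
    | add x y hx hy =>
        intro m
        rw [map_add, add_smul, map_add, hx, hy, add_smul]
  obtain ⟨x, rfl⟩ := RingQuot.mkAlgHom_surjective K (SRel K N q) d
  exact main x m

/-- Right translation by `w` as a `D`-linear endomorphism. -/
def T (w : Equiv.Perm (Fin N)) : Module.End (SmashD K N q) (M K N) where
  toFun := Tl K w
  map_add' := map_add _
  map_smul' := Tl_dsmul K q w

lemma T_apply (w : Equiv.Perm (Fin N)) (m : M K N) : T K q w m = Tl K w m := rfl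

/-- `w ↦ T w` as a monoid hom to the opposite endomorphism ring. -/
def Thom : Equiv.Perm (Fin N) →* (Module.End (SmashD K N q) (M K N))ᵐᵒᵖ where
  toFun w := MulOpposite.op (T K q w)
  map_one' := by
    show MulOpposite.op (T K q 1) = MulOpposite.op 1
    congr 1
    apply LinearMap.ext
    intro m
    induction m using Finsupp.induction_linear with
    | zero => simp
    | add m1 m2 h1 h2 => rw [map_add, h1, h2, map_add]
    | single p c => rw [T_apply, Tl_single, mul_one, Module.End.one_apply]
  map_mul' w w' := by
    show MulOpposite.op (T K q (w * w')) = MulOpposite.op (T K q w) * MulOpposite.op (T K q w')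
    rw [← MulOpposite.op_mul]
    congr 1
    apply LinearMap.ext
    intro m
    induction m using Finsupp.induction_linear with
    | zero => simp
    | add m1 m2 h1 h2 => rw [map_add, h1, h2, map_add]
    | single p c =>
        rw [T_apply, Tl_single, Module.End.mul_apply, T_apply, T_apply, Tl_single,
          Tl_single, mul_assoc]

/-- The map from the group algebra into the opposite endomorphism algebra. -/
def Ψ : MonoidAlgebra K (Equiv.Perm (Fin N)) →ₐ[K]
    (Module.End (SmashD K N q) (M K N))ᵐᵒᵖ :=
  MonoidAlgebra.lift K _ (Equiv.Perm (Fin N)) (Thom K q)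

lemma psi_m₀ (g : MonoidAlgebra K (Equiv.Perm (Fin N))) :
    (Ψ K q g).unop (m₀ K)
      = Finsupp.mapDomain (fun w => ((0 : Fin N →₀ ℤ), w)) g.coeff := by
  induction g using MonoidAlgebra.induction_linear with
  | zero => simp
  | add g1 g2 h1 h2 =>
      rw [map_add, MonoidAlgebra.coeff_add, Finsupp.mapDomain_add, ← h1, ← h2]
      rfl
  | single w c =>
      rw [MonoidAlgebra.coeff_single, Finsupp.mapDomain_single]
      show (Ψ K q (MonoidAlgebra.single w c)).unop (m₀ K) = _
      rw [Ψ, MonoidAlgebra.lift_single]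
      show (c • (T K q w)) (m₀ K) = _
      rw [LinearMap.smul_apply, T_apply, m₀, Tl_single, one_mul, Finsupp.smul_single,
        smul_eq_mul, mul_one]

end S11
namespace S11

variable (K : Type) [Field K] {N : ℕ} (q : Kˣ)

lemma qz (hq : ∀ m : ℕ, m ≠ 0 → (q : K) ^ m ≠ 1) {z : ℤ}
    (h : ((q ^ z : Kˣ) : K) = 1) : z = 0 := by
  have hu : q ^ z = (1 : Kˣ) := Units.ext (by simpa using h)
  rcases Int.eq_nat_or_neg z with ⟨n, rfl | rfl⟩
  · by_contra hz
    have hn : n ≠ 0 := by exact_mod_cast hz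
    apply hq n hn
    have h2 := congrArg Units.val hu
    rw [zpow_natCast] at h2
    simpa using h2
  · by_contra hz
    have hn : n ≠ 0 := by simpa using hz
    apply hq n hn
    rw [zpow_neg, inv_eq_one, zpow_natCast] at hu
    have h2 := congrArg Units.val hu
    simpa using h2

lemma gen_diag_apply (F : P N → K) (m : M K N) (p : P N) :
    gen K F id m p = F p * m p := by
  induction m using Finsupp.induction_linear with
  | zero => simp
  | add m1 m2 h1 h2 =>
      rw [map_add, Finsupp.add_apply, h1, h2, Finsupp.add_apply, mul_add]
  | single p' c =>
      rw [gen_single, id_eq]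
      by_cases h : p' = p
      · subst h; rw [Finsupp.single_eq_same, Finsupp.single_eq_same]
      · rw [Finsupp.single_eq_of_ne' h, Finsupp.single_eq_of_ne' h, mul_zero]

lemma psi_bijective (hq : ∀ m : ℕ, m ≠ 0 → (q : K) ^ m ≠ 1) :
    Function.Bijective (Ψ K q (N := N)) := by
  constructor
  · rw [injective_iff_map_eq_zero]
    intro g hg
    have h := psi_m₀ K q g
    rw [hg] at h
    have h0 : Finsupp.mapDomain (fun w : Equiv.Perm (Fin N) =>
        ((0 : Fin N →₀ ℤ), w)) g.coeff = 0 := by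
      rw [← h]
      rfl
    have hinj : Function.Injective
        (fun w : Equiv.Perm (Fin N) => ((0 : Fin N →₀ ℤ), w)) :=
      fun a b hab => congrArg Prod.snd hab
    apply MonoidAlgebra.coeff_injective
    apply Finsupp.mapDomain_injective hinj
    rw [h0, MonoidAlgebra.coeff_zero, Finsupp.mapDomain_zero]
  · intro y
    set φ := y.unop with hφ
    set m := φ (m₀ K) with hm
    have hfix : ∀ i : Fin N, ρ K q (Ye K q i) m = m := by
      intro i
      show Ye K q i • m = m
      rw [hm, ← map_smul, rho_Y_m₀]
    have hsupp : ∀ p ∈ m.support, p.1 = (0 : Fin N →₀ ℤ) := by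
      intro p hp
      have hmp : m p ≠ 0 := Finsupp.mem_support_iff.mp hp
      ext i
      have hc : ((q ^ p.1 i : Kˣ) : K) * m p = m p := by
        have h3 : ρ K q (Ye K q i) m = gen K (fun p => ((q ^ p.1 i : Kˣ) : K)) id m := by
          show ρ K q (mkD K q (sg K (.Y i))) m = _
          rw [ρ_gen]
          rfl
        have h4 := gen_diag_apply K (fun p : P N => ((q ^ p.1 i : Kˣ) : K)) m p
        rw [← h3, hfix i] at h4
        exact h4.symm
      have this : ((q ^ p.1 i : Kˣ) : K) = 1 := by
        have h5 : (((q ^ p.1 i : Kˣ) : K) - 1) * m p = 0 := by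
          rw [sub_one_mul, hc, sub_self]
        rcases mul_eq_zero.mp h5 with h6 | h6
        · exact sub_eq_zero.mp h6
        · exact absurd h6 hmp
      simpa using qz K q hq this
    refine ⟨MonoidAlgebra.ofCoeff (Finsupp.mapDomain Prod.snd m), ?_⟩
    have key : (Ψ K q (MonoidAlgebra.ofCoeff (Finsupp.mapDomain Prod.snd m))).unop = φ := by
      apply LinearMap.ext
      intro x
      obtain ⟨d, hd⟩ := Submodule.Quotient.mk_surjective _ (σD K q x)
      have hx : x = d • m₀ K := by
        rw [← pi_sigma K q x, ← hd, πD_mk]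
      rw [hx, map_smul, map_smul]
      congr 1
      have hcongr : Finsupp.mapDomain
            ((fun w : Equiv.Perm (Fin N) => ((0 : Fin N →₀ ℤ), w)) ∘ Prod.snd) m
          = Finsupp.mapDomain id m :=
        Finsupp.mapDomain_congr (fun p hp => by
          show ((0 : Fin N →₀ ℤ), p.2) = p
          rw [← hsupp p hp])
      rw [psi_m₀, MonoidAlgebra.coeff_ofCoeff, ← Finsupp.mapDomain_comp, hcongr, Finsupp.mapDomain_id]
    exact MulOpposite.unop_injective (by rw [key])

lemma piD_Ksmul (c : K) (y : SmashD K N q ⧸ unipIdeal K N q) :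
    πD K q (c • y) = c • πD K q y := by
  obtain ⟨d, rfl⟩ := Submodule.Quotient.mk_surjective _ y
  rw [← Submodule.Quotient.mk_smul, πD_mk, πD_mk]
  show ρ K q (c • d) (m₀ K) = c • ρ K q d (m₀ K)
  rw [map_smul, LinearMap.smul_apply]

set_option maxHeartbeats 1000000 in
/-- Conjugation by the equivalence `eqv`. -/
def endEquiv : Module.End (SmashD K N q) (SmashD K N q ⧸ unipIdeal K N q) ≃ₐ[K]
    Module.End (SmashD K N q) (M K N) where
  toFun φ := (πD K q ∘ₗ φ) ∘ₗ σD K q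
  invFun ψ := (σD K q ∘ₗ ψ) ∘ₗ πD K q
  left_inv φ := by
    apply LinearMap.ext
    intro x
    show σD K q (πD K q (φ (σD K q (πD K q x)))) = φ x
    rw [sigma_pi, sigma_pi]
  right_inv ψ := by
    apply LinearMap.ext
    intro m
    show πD K q (σD K q (ψ (πD K q (σD K q m)))) = ψ m
    rw [pi_sigma, pi_sigma]
  map_mul' φ ψ := by
    apply LinearMap.ext
    intro m
    show πD K q (φ (ψ (σD K q m)))
      = πD K q (φ (σD K q (πD K q (ψ (σD K q m)))))
    rw [sigma_pi]
  map_add' φ ψ := by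
    apply LinearMap.ext
    intro m
    show πD K q ((φ + ψ) (σD K q m)) = _
    rw [LinearMap.add_apply, map_add]
    rfl
  commutes' c := by
    apply LinearMap.ext
    intro m
    rw [Module.algebraMap_end_eq_smul_id, Module.algebraMap_end_eq_smul_id]
    show πD K q ((c • LinearMap.id) (σD K q m)) = _
    rw [LinearMap.smul_apply, LinearMap.smul_apply, LinearMap.id_apply,
      LinearMap.id_apply, piD_Ksmul, pi_sigma]

end S11

theorem statement11 (K : Type) [Field K] [CharZero K] (N : ℕ) (hN : 1 ≤ N)
    (q : Kˣ) (hq : ∀ m : ℕ, m ≠ 0 → (q : K) ^ m ≠ 1) :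
    Nonempty
      (Module.End (SmashD K N q) (SmashD K N q ⧸ unipIdeal K N q) ≃ₐ[K]
        (MonoidAlgebra K (Equiv.Perm (Fin N)))ᵐᵒᵖ) := by
  refine ⟨(S11.endEquiv K q).trans ?_⟩
  have e1 : MonoidAlgebra K (Equiv.Perm (Fin N)) ≃ₐ[K]
      (Module.End (SmashD K N q) (S11.M K N))ᵐᵒᵖ :=
    AlgEquiv.ofBijective (S11.Ψ K q) (S11.psi_bijective K q hq)
  exact ((AlgEquiv.op e1).trans (AlgEquiv.opOp K _).symm).symm
end
end

section
/- Let Γ ⊆ D be the subalgebra generated by Y₁^{±1},…,Y_N^{±1} and the elements s_w for w ∈ S_N. For a K[S_N]-module S, let 1^N ⊠ S denote the Γ-module with underlying space S on which each s_w acts by w and each Y_i acts by the identity. If S is a simple K[S_N]-module, then the induced module D ⊗_Γ (1^N ⊠ S) is a simple left D-module. -/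
/-!
Statement 12: Let `K` be a field of characteristic zero, `q ∈ K^×` not a root
of unity, and `D = D_q(H) # S_N` the smash product of the quantum torus with
the symmetric group.  Let `Γ ⊆ D` be the subalgebra generated by `Y_i^{±1}` and
the `s_w`, and for a `K[S_N]`-module `S` let `1^N ⊠ S` be the `Γ`-module with
underlying space `S` on which each `s_w` acts by `w` and each `Y_i` by the
identity.  If `S` is a simple `K[S_N]`-module, then `D ⊗_Γ (1^N ⊠ S)` is a
simple left `D`-module.

The relative tensor product `D ⊗_Γ (1^N ⊠ S)` is realized as the quotient of
`D ⊗_K S` by the `D`-submodule spanned by the elements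
`d·γ ⊗ s − d ⊗ γ·s` for `γ` ranging over the generators `Y_i`, `Y_i^{-1}`,
`s_w` of `Γ`.  A `K[S_N]`-module is a `K`-vector space with a `K`-linear action
of `S_N`; it is simple when it is nonzero and has no invariant `K`-submodules
other than `⊥` and `⊤`.
-/

noncomputable section

/-- The element `s_w` of `D`. -/
def Se (K : Type) [Field K] {N : ℕ} (q : Kˣ) (w : Equiv.Perm (Fin N)) : SmashD K N q :=
  RingQuot.mkAlgHom K (SRel K N q) (sg K (.S w))

open scoped TensorProduct

/-- The `D`-submodule of `D ⊗_K S` spanned by the relations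
`d·γ ⊗ s − d ⊗ γ·s`, for `γ` among the generators `Y_i`, `Y_i^{-1}`, `s_w` of
`Γ` acting on `1^N ⊠ S` (the `Y_i^{±1}` acting by the identity, `s_w` by `w`).
The quotient by it is the relative tensor product `D ⊗_Γ (1^N ⊠ S)`. -/
def indRel (K : Type) [Field K] (N : ℕ) (q : Kˣ) (S : Type) [AddCommGroup S]
    [Module K S] [DistribMulAction (Equiv.Perm (Fin N)) S]
    [SMulCommClass (Equiv.Perm (Fin N)) K S] :
    Submodule (SmashD K N q) (SmashD K N q ⊗[K] S) :=
  Submodule.span (SmashD K N q)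
    ({x | ∃ (d : SmashD K N q) (i : Fin N) (s : S),
        x = (d * Ye K q i) ⊗ₜ[K] s - d ⊗ₜ[K] s} ∪
     {x | ∃ (d : SmashD K N q) (i : Fin N) (s : S),
        x = (d * YeInv K q i) ⊗ₜ[K] s - d ⊗ₜ[K] s} ∪
     {x | ∃ (d : SmashD K N q) (w : Equiv.Perm (Fin N)) (s : S),
        x = (d * Se K q w) ⊗ₜ[K] s - d ⊗ₜ[K] (w • s)})

namespace S12

open Finsupp

variable (K : Type) [Field K] (N : ℕ) (q : Kˣ)

/-- `X_i` in `D`. -/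
def Xe (i : Fin N) : SmashD K N q := RingQuot.mkAlgHom K (SRel K N q) (sg K (.X i))
/-- `X_i⁻¹` in `D`. -/
def XeI (i : Fin N) : SmashD K N q := RingQuot.mkAlgHom K (SRel K N q) (sg K (.Xinv i))

local notation "mk!" => RingQuot.mkAlgHom K (SRel K N q)

lemma rel {x y : FreeAlgebra K (SGen N)} (h : SRel K N q x y) :
    mk! x = mk! y := RingQuot.mkAlgHom_rel K h

lemma Xe_mul_XeI (i : Fin N) : Xe K N q i * XeI K N q i = 1 := by
  have := rel K N q (SRel.XXinv (q := q) i)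
  simpa [Xe, XeI, map_mul] using this

lemma XeI_mul_Xe (i : Fin N) : XeI K N q i * Xe K N q i = 1 := by
  have := rel K N q (SRel.XinvX (q := q) i)
  simpa [Xe, XeI, map_mul] using this

/-- `X_i` as a unit. -/
def uX (i : Fin N) : (SmashD K N q)ˣ :=
  ⟨Xe K N q i, XeI K N q i, Xe_mul_XeI K N q i, XeI_mul_Xe K N q i⟩

lemma Se_mul_Se (w w' : Equiv.Perm (Fin N)) :
    Se K q w * Se K q w' = Se K q (w * w') := by
  have := rel K N q (SRel.Smul (q := q) w w')
  simpa [Se, map_mul] using this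

lemma Se_one : Se K q (1 : Equiv.Perm (Fin N)) = 1 := by
  have := rel K N q (SRel.Sone (q := q) (N := N))
  simpa [Se] using this

/-- `s_w` as a unit. -/
def uS (w : Equiv.Perm (Fin N)) : (SmashD K N q)ˣ :=
  ⟨Se K q w, Se K q w⁻¹, by rw [Se_mul_Se, mul_inv_cancel, Se_one],
    by rw [Se_mul_Se, inv_mul_cancel, Se_one]⟩

lemma commute_uX (i j : Fin N) : Commute (uX K N q i) (uX K N q j) := by
  apply Units.ext
  have := rel K N q (SRel.XX (q := q) i j)
  simpa [uX, Xe, map_mul] using this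

/-- The monoid hom behind `X^a`. -/
def XpowHom : (Fin N → Multiplicative ℤ) →* (SmashD K N q)ˣ :=
  MonoidHom.noncommPiCoprod (fun i => zpowersHom _ (uX K N q i))
    (fun i j _ x y => ((commute_uX K N q i j).zpow_zpow _ _))

/-- The unit `X^a = ∏ X_i^{a i}` for `a : Fin N → ℤ`. -/
def XpowU (a : Fin N → ℤ) : (SmashD K N q)ˣ :=
  XpowHom K N q (fun i => Multiplicative.ofAdd (a i))

/-- The element `X^a` of `D`. -/
def Xpow (a : Fin N → ℤ) : SmashD K N q := ↑(XpowU K N q a)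

lemma XpowU_zero : XpowU K N q 0 = 1 := map_one (XpowHom K N q)

lemma XpowU_add (a b : Fin N → ℤ) :
    XpowU K N q (a + b) = XpowU K N q a * XpowU K N q b :=
  map_mul (XpowHom K N q) (fun i => Multiplicative.ofAdd (a i))
    (fun i => Multiplicative.ofAdd (b i))

lemma XpowU_single (j : Fin N) (n : ℤ) :
    XpowU K N q (n • Pi.single j 1) = uX K N q j ^ n := by
  classical
  have h : (fun i => Multiplicative.ofAdd (((n • Pi.single j 1 : Fin N → ℤ)) i))
      = (Pi.mulSingle j (Multiplicative.ofAdd n) : Fin N → Multiplicative ℤ) := by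
    funext i
    rw [Pi.mulSingle_apply]
    by_cases hij : i = j
    · subst hij; simp
    · simp [hij, Pi.single_eq_of_ne hij]
  unfold XpowU XpowHom
  rw [h]; refine (MonoidHom.noncommPiCoprod_mulSingle _ _ _).trans ?_
  simp

lemma Xpow_zero : Xpow K N q 0 = 1 := by simp [Xpow, XpowU_zero]

lemma Xpow_add (a b : Fin N → ℤ) :
    Xpow K N q (a + b) = Xpow K N q a * Xpow K N q b := by
  simp [Xpow, XpowU_add]

end S12
namespace S12
section
open Finsupp
variable (K : Type) [Field K] (N : ℕ) (q : Kˣ)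
variable (S : Type) [AddCommGroup S] [Module K S]
  [DistribMulAction (Equiv.Perm (Fin N)) S] [SMulCommClass (Equiv.Perm (Fin N)) K S]

/-- The underlying space of the standard module: `⊕_{a ∈ ℤ^N} X^a ⊗ S`. -/
abbrev MM := (Fin N → ℤ) →₀ S

/-- Action of `X^v`. -/
def opX (v : Fin N → ℤ) : MM N S →ₗ[K] MM N S := Finsupp.lmapDomain S K (· + v)

/-- Action of `Y_i`. -/
def opY (i : Fin N) : MM N S →ₗ[K] MM N S :=
  Finsupp.lsum K fun a => (Finsupp.lsingle a) ∘ₗ (((q ^ (a i) : Kˣ) : K) • LinearMap.id)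

/-- Action of `Y_i⁻¹`. -/
def opYI (i : Fin N) : MM N S →ₗ[K] MM N S :=
  Finsupp.lsum K fun a => (Finsupp.lsingle a) ∘ₗ ((((q ^ (a i))⁻¹ : Kˣ) : K) • LinearMap.id)

/-- Action of `s_w`. -/
def opS (w : Equiv.Perm (Fin N)) : MM N S →ₗ[K] MM N S :=
  Finsupp.lsum K fun a =>
    (Finsupp.lsingle (fun j => a (w⁻¹ j))) ∘ₗ (DistribMulAction.toLinearMap K S w)

variable {N S}

lemma opX_single (v a : Fin N → ℤ) (s : S) :
    opX K N S v (single a s) = single (a + v) s := by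
  simp [opX, Finsupp.mapDomain_single]

lemma opY_single (i : Fin N) (a : Fin N → ℤ) (s : S) :
    opY K N q S i (single a s) = ((q ^ (a i) : Kˣ) : K) • single a s := by
  rw [opY, Finsupp.lsum_single]
  simp [Finsupp.smul_single]

lemma opYI_single (i : Fin N) (a : Fin N → ℤ) (s : S) :
    opYI K N q S i (single a s) = (((q ^ (a i))⁻¹ : Kˣ) : K) • single a s := by
  rw [opYI, Finsupp.lsum_single]
  simp [Finsupp.smul_single]

lemma opS_single (w : Equiv.Perm (Fin N)) (a : Fin N → ℤ) (s : S) :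
    opS K N S w (single a s) = single (fun j => a (w⁻¹ j)) (w • s) := by
  rw [opS, Finsupp.lsum_single]
  rfl

variable (N S)

/-- Images of the generators. -/
def gens : SGen N → Module.End K (MM N S) := fun g =>
  match g with
  | .X i => opX K N S (Pi.single i 1)
  | .Xinv i => opX K N S (-Pi.single i 1)
  | .Y i => opY K N q S i
  | .Yinv i => opYI K N q S i
  | .S w => opS K N S w

/-- The action of the free algebra. -/
def FF : FreeAlgebra K (SGen N) →ₐ[K] Module.End K (MM N S) :=
  FreeAlgebra.lift K (gens K N q S)

lemma FF_sg (g : SGen N) : FF K N q S (sg K g) = gens K N q S g := by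
  simp [FF, sg, FreeAlgebra.lift_ι_apply]

lemma FF_rel : ∀ ⦃x y⦄, SRel K N q x y → FF K N q S x = FF K N q S y := by
  intro x y h
  induction h with
  | XX i j =>
    refine Finsupp.lhom_ext fun a s => ?_
    simp only [map_mul, Module.End.mul_apply, FF_sg, gens, opX_single]
    rw [add_right_comm]
  | XXinv i =>
    refine Finsupp.lhom_ext fun a s => ?_
    rw [map_mul, map_one]
    simp only [Module.End.mul_apply, FF_sg, gens, opX_single, Module.End.one_apply]
    rw [neg_add_cancel_right]
  | XinvX i =>
    refine Finsupp.lhom_ext fun a s => ?_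
    rw [map_mul, map_one]
    simp only [Module.End.mul_apply, FF_sg, gens, opX_single, Module.End.one_apply]
    rw [add_neg_cancel_right]
  | YY i j =>
    refine Finsupp.lhom_ext fun a s => ?_
    simp only [map_mul, Module.End.mul_apply, FF_sg, gens, opY_single, map_smul, smul_smul]
    rw [mul_comm]
  | YYinv i =>
    refine Finsupp.lhom_ext fun a s => ?_
    rw [map_mul, map_one]
    simp only [Module.End.mul_apply, FF_sg, gens, opY_single, opYI_single, map_smul,
      smul_smul, Module.End.one_apply]
    rw [← Units.val_mul, inv_mul_cancel, Units.val_one, one_smul]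
  | YinvY i =>
    refine Finsupp.lhom_ext fun a s => ?_
    rw [map_mul, map_one]
    simp only [Module.End.mul_apply, FF_sg, gens, opY_single, opYI_single, map_smul,
      smul_smul, Module.End.one_apply]
    rw [← Units.val_mul, mul_inv_cancel, Units.val_one, one_smul]
  | YXne i j hij =>
    refine Finsupp.lhom_ext fun a s => ?_
    simp only [map_mul, Module.End.mul_apply, FF_sg, gens, opX_single, opY_single, map_smul]
    have h1 : (a + Pi.single j 1 : Fin N → ℤ) i = a i := by
      simp [Pi.single_eq_of_ne hij]
    rw [h1]
  | YXeq i =>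
    refine Finsupp.lhom_ext fun a s => ?_
    rw [map_mul, map_smul, map_mul]
    simp only [Module.End.mul_apply, LinearMap.smul_apply, FF_sg, gens, opX_single,
      opY_single, map_smul, smul_smul]
    have h1 : (a + Pi.single i 1 : Fin N → ℤ) i = a i + 1 := by simp
    rw [h1, zpow_add_one, Units.val_mul, mul_comm]
  | Smul w w' =>
    refine Finsupp.lhom_ext fun a s => ?_
    simp only [map_mul, Module.End.mul_apply, FF_sg, gens, opS_single, mul_smul]
    have h1 : (fun j => a (w'⁻¹ (w⁻¹ j))) = fun j => a ((w * w')⁻¹ j) := by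
      funext j
      simp [mul_inv_rev]
    rw [h1]
  | Sone =>
    refine Finsupp.lhom_ext fun a s => ?_
    rw [map_one]
    simp [FF_sg, gens, opS_single]
  | SX w i =>
    refine Finsupp.lhom_ext fun a s => ?_
    simp only [map_mul, Module.End.mul_apply, FF_sg, gens, opS_single, opX_single]
    congr 1
    funext j
    have h2 : (Pi.single i 1 : Fin N → ℤ) (w⁻¹ j) = (Pi.single (w i) 1 : Fin N → ℤ) j := by
      by_cases hj : j = w i
      · subst hj; rw [Pi.single_eq_same, Equiv.Perm.coe_inv, Equiv.symm_apply_apply, Pi.single_eq_same]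
      · rw [Pi.single_eq_of_ne hj, Pi.single_eq_of_ne]
        intro hc
        exact hj (by rw [← hc]; simp)
    rw [Equiv.Perm.coe_inv] at h2
    simp [h2]
  | SY w i =>
    refine Finsupp.lhom_ext fun a s => ?_
    simp only [map_mul, Module.End.mul_apply, FF_sg, gens, opS_single, opY_single, map_smul]
    simp [Equiv.Perm.coe_inv, Equiv.symm_apply_apply]

end
end S12
namespace S12
section
open Finsupp
variable (K : Type) [Field K] (N : ℕ) (q : Kˣ)
variable (S : Type) [AddCommGroup S] [Module K S]
  [DistribMulAction (Equiv.Perm (Fin N)) S] [SMulCommClass (Equiv.Perm (Fin N)) K S]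

/-- Decomposition of `ℤ^N` into multiples of basis vectors. -/
lemma pi_int_induction (P : (Fin N → ℤ) → Prop) (h0 : P 0)
    (hadd : ∀ a b, P a → P b → P (a + b))
    (hsingle : ∀ (j : Fin N) (n : ℤ), P (n • Pi.single j 1)) : ∀ a, P a := by
  classical
  intro a
  have ha : a = ∑ j : Fin N, a j • Pi.single j 1 := by
    funext k
    rw [Finset.sum_apply]
    simp only [Pi.smul_apply, smul_eq_mul]
    rw [Finset.sum_eq_single k]
    · simp
    · intro b _ hbk
      rw [Pi.single_eq_of_ne (Ne.symm hbk)]; ring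
    · intro hk; exact absurd (Finset.mem_univ k) hk
  rw [ha]
  exact Finset.sum_induction _ P hadd h0 (fun j _ => hsingle j (a j))

/-- The representation of `D` on `MM`. -/
def psi : SmashD K N q →ₐ[K] Module.End K (MM N S) :=
  RingQuot.liftAlgHom K ⟨FF K N q S, FF_rel K N q S⟩

lemma psi_mk (g : SGen N) :
    psi K N q S (RingQuot.mkAlgHom K (SRel K N q) (sg K g)) = gens K N q S g := by
  rw [psi, RingQuot.liftAlgHom_mkAlgHom_apply]
  exact FF_sg K N q S g

variable {N}

lemma psi_Xe (i : Fin N) (a : Fin N → ℤ) (s : S) :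
    psi K N q S (Xe K N q i) (single a s) = single (a + Pi.single i 1) s := by
  rw [Xe, psi_mk]; exact opX_single K _ _ _

lemma psi_XeI (i : Fin N) (a : Fin N → ℤ) (s : S) :
    psi K N q S (XeI K N q i) (single a s) = single (a - Pi.single i 1) s := by
  rw [XeI, psi_mk]
  rw [show (a - Pi.single i 1 : Fin N → ℤ) = a + (-Pi.single i 1) from by ring]
  exact opX_single K _ _ _

lemma psi_Ye (i : Fin N) (a : Fin N → ℤ) (s : S) :
    psi K N q S (Ye K q i) (single a s) = ((q ^ (a i) : Kˣ) : K) • single a s := by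
  rw [Ye, psi_mk]; exact opY_single K q _ _ _

lemma psi_YeInv (i : Fin N) (a : Fin N → ℤ) (s : S) :
    psi K N q S (YeInv K q i) (single a s) = (((q ^ (a i))⁻¹ : Kˣ) : K) • single a s := by
  rw [YeInv, psi_mk]; exact opYI_single K q _ _ _

lemma psi_Se (w : Equiv.Perm (Fin N)) (a : Fin N → ℤ) (s : S) :
    psi K N q S (Se K q w) (single a s) = single (fun j => a (w⁻¹ j)) (w • s) := by
  rw [Se, psi_mk]; exact opS_single K _ _ _

lemma psi_uX_zpow (i : Fin N) (n : ℤ) (a : Fin N → ℤ) (s : S) :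
    psi K N q S ((uX K N q i ^ n : (SmashD K N q)ˣ) : SmashD K N q) (single a s)
      = single (a + n • Pi.single i 1) s := by
  induction n using Int.induction_on generalizing a s with
  | zero => simp [map_one, Module.End.one_apply]
  | succ n ih =>
    have : (uX K N q i ^ ((n : ℤ) + 1)) = uX K N q i ^ (n : ℤ) * uX K N q i := by
      rw [zpow_add_one]
    rw [this, Units.val_mul, map_mul, Module.End.mul_apply]
    have hval : ((uX K N q i : (SmashD K N q)ˣ) : SmashD K N q) = Xe K N q i := rfl
    rw [hval, psi_Xe, ih]
    congr 1
    funext k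
    simp only [Pi.add_apply, Pi.smul_apply, smul_eq_mul]
    ring
  | pred n ih =>
    have : (uX K N q i ^ (-(n : ℤ) - 1)) = uX K N q i ^ (-(n : ℤ)) * (uX K N q i)⁻¹ := by
      rw [zpow_sub_one]
    rw [this, Units.val_mul, map_mul, Module.End.mul_apply]
    have hval : (((uX K N q i)⁻¹ : (SmashD K N q)ˣ) : SmashD K N q) = XeI K N q i := rfl
    rw [hval, psi_XeI, ih]
    congr 1
    funext k
    simp only [Pi.add_apply, Pi.sub_apply, Pi.smul_apply, smul_eq_mul]
    ring

lemma psi_Xpow (a b : Fin N → ℤ) (s : S) :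
    psi K N q S (Xpow K N q a) (single b s) = single (b + a) s := by
  induction a using pi_int_induction generalizing b s with
  | h0 => rw [Xpow_zero]; simp [map_one, Module.End.one_apply]
  | hadd a a' ha ha' =>
    rw [Xpow_add, map_mul, Module.End.mul_apply, ha', ha]
    congr 1
    funext k
    simp only [Pi.add_apply]
    ring
  | hsingle j n =>
    rw [Xpow, XpowU_single]
    exact psi_uX_zpow K q S j n b s

end
end S12
namespace S12
section
open Finsupp
variable (K : Type) [Field K] {N : ℕ} (q : Kˣ)

variable {A : Type} [Ring A] [Algebra K A]

lemma comm_inv_right (u : Aˣ) (x : A) (c : Kˣ)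
    (h : x * ↑u = (c : K) • ((u : A) * x)) :
    x * ↑u⁻¹ = ((c⁻¹ : Kˣ) : K) • ((↑u⁻¹ : A) * x) := by
  have h3 : (↑u⁻¹ : A) * x = (c : K) • (x * ↑u⁻¹) := by
    have e1 : (↑u⁻¹ : A) * (x * ↑u) * ↑u⁻¹ = ↑u⁻¹ * x := by
      rw [← mul_assoc]
      exact Units.mul_inv_cancel_right _ u
    rw [← e1, h, mul_smul_comm, smul_mul_assoc]
    congr 1
    rw [← mul_assoc, Units.inv_mul, one_mul]
  rw [h3, smul_smul, ← Units.val_mul, inv_mul_cancel, Units.val_one, one_smul]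

lemma inv_comm_left (v : Aˣ) (y : A) (c : Kˣ)
    (h : (v : A) * y = (c : K) • (y * ↑v)) :
    (↑v⁻¹ : A) * y = ((c⁻¹ : Kˣ) : K) • (y * ↑v⁻¹) := by
  have h3 : y * (↑v⁻¹ : A) = (c : K) • ((↑v⁻¹ : A) * y) := by
    have e1 : (↑v⁻¹ : A) * ((v : A) * y) * ↑v⁻¹ = y * ↑v⁻¹ := by
      rw [← mul_assoc, Units.inv_mul, one_mul]
    rw [← e1, h, mul_smul_comm, smul_mul_assoc]
    congr 1
    rw [← mul_assoc]
    exact Units.mul_inv_cancel_right _ v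
  rw [h3, smul_smul, ← Units.val_mul, inv_mul_cancel, Units.val_one, one_smul]

lemma comm_zpow (u : Aˣ) (x : A) (c : Kˣ)
    (h : x * ↑u = (c : K) • ((u : A) * x)) (n : ℤ) :
    x * ((u ^ n : Aˣ) : A) = ((c ^ n : Kˣ) : K) • (((u ^ n : Aˣ) : A) * x) := by
  induction n using Int.induction_on with
  | zero => simp
  | succ n ih =>
    have e : u ^ ((n : ℤ) + 1) = u ^ (n : ℤ) * u := by rw [zpow_add_one]
    have ec : c ^ ((n : ℤ) + 1) = c ^ (n : ℤ) * c := by rw [zpow_add_one]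
    rw [e, ec, Units.val_mul, Units.val_mul, ← mul_assoc, ih, smul_mul_assoc,
      mul_assoc, h, mul_smul_comm, smul_smul, mul_assoc]
  | pred n ih =>
    have e : u ^ (-(n : ℤ) - 1) = u ^ (-(n : ℤ)) * u⁻¹ := by rw [zpow_sub_one]
    have ec : c ^ (-(n : ℤ) - 1) = c ^ (-(n : ℤ)) * c⁻¹ := by rw [zpow_sub_one]
    rw [e, ec, Units.val_mul, Units.val_mul, ← mul_assoc, ih, smul_mul_assoc,
      mul_assoc, comm_inv_right K u x c h, mul_smul_comm, smul_smul, mul_assoc]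

end

section
open Finsupp
variable (K : Type) [Field K] {N : ℕ} (q : Kˣ)

/-- `Y_i` as a unit. -/
def uY (i : Fin N) : (SmashD K N q)ˣ :=
  ⟨Ye K q i, YeInv K q i,
    by have := rel K N q (SRel.YYinv (q := q) i); simpa [Ye, YeInv, map_mul] using this,
    by have := rel K N q (SRel.YinvY (q := q) i); simpa [Ye, YeInv, map_mul] using this⟩

/-- The scalar with which `Y_i` commutes past `X_j`. -/
def cf (i j : Fin N) : Kˣ := if i = j then q else 1

lemma Ye_mul_uX (i j : Fin N) :
    Ye K q i * ↑(uX K N q j) = ((cf K q i j : Kˣ) : K) • ((uX K N q j : SmashD K N q) * Ye K q i) := by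
  by_cases hij : i = j
  · subst hij
    have := rel K N q (SRel.YXeq (q := q) i)
    simp only [map_mul, map_smul] at this
    simpa [cf, uX, Ye, Xe] using this
  · have := rel K N q (SRel.YXne (q := q) i j hij)
    simp only [map_mul] at this
    simpa [cf, hij, uX, Ye, Xe] using this

lemma YeInv_mul_uX (i j : Fin N) :
    YeInv K q i * ↑(uX K N q j)
      = (((cf K q i j)⁻¹ : Kˣ) : K) • ((uX K N q j : SmashD K N q) * YeInv K q i) :=
  inv_comm_left K (uY K q i) (↑(uX K N q j)) (cf K q i j) (Ye_mul_uX K q i j)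

lemma Ye_mul_Xpow (i : Fin N) (a : Fin N → ℤ) :
    Ye K q i * Xpow K N q a
      = ((q ^ (a i) : Kˣ) : K) • (Xpow K N q a * Ye K q i) := by
  induction a using pi_int_induction with
  | h0 => simp [Xpow_zero]
  | hadd a b ha hb =>
    rw [Xpow_add, ← mul_assoc, ha, smul_mul_assoc, mul_assoc, hb, mul_smul_comm,
      smul_smul, ← Units.val_mul, ← zpow_add]
    simp [mul_assoc]
  | hsingle j n =>
    rw [Xpow, XpowU_single]
    have := comm_zpow K (uX K N q j) (Ye K q i) (cf K q i j) (Ye_mul_uX K q i j) n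
    rw [this]
    congr 2
    by_cases hij : i = j
    · subst hij; simp [cf]
    · simp [cf, hij, Pi.single_eq_of_ne hij]

lemma YeInv_mul_Xpow (i : Fin N) (a : Fin N → ℤ) :
    YeInv K q i * Xpow K N q a
      = (((q ^ (a i))⁻¹ : Kˣ) : K) • (Xpow K N q a * YeInv K q i) := by
  induction a using pi_int_induction with
  | h0 => simp [Xpow_zero]
  | hadd a b ha hb =>
    rw [Xpow_add, ← mul_assoc, ha, smul_mul_assoc, mul_assoc, hb, mul_smul_comm,
      smul_smul, ← Units.val_mul, ← mul_inv, ← zpow_add]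
    simp [mul_assoc]
  | hsingle j n =>
    rw [Xpow, XpowU_single]
    have := comm_zpow K (uX K N q j) (YeInv K q i) ((cf K q i j)⁻¹)
      (YeInv_mul_uX K q i j) n
    rw [this]
    congr 2
    by_cases hij : i = j
    · subst hij; simp [cf, inv_zpow]
    · simp [cf, hij, Pi.single_eq_of_ne hij]


lemma Xpow_single_one (i : Fin N) : Xpow K N q (Pi.single i 1) = Xe K N q i := by
  rw [Xpow, show (Pi.single i 1 : Fin N → ℤ) = (1 : ℤ) • Pi.single i 1 from (one_smul _ _).symm,
    XpowU_single, zpow_one]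
  rfl

lemma Xpow_single_neg_one (i : Fin N) : Xpow K N q (-Pi.single i 1) = XeI K N q i := by
  rw [Xpow, show (-Pi.single i 1 : Fin N → ℤ) = (-1 : ℤ) • Pi.single i 1 from
    (neg_one_smul _ _).symm, XpowU_single, zpow_neg_one]
  rfl

lemma Se_mul_Xe (w : Equiv.Perm (Fin N)) (i : Fin N) :
    Se K q w * Xe K N q i = Xe K N q (w i) * Se K q w := by
  have := rel K N q (SRel.SX (q := q) w i)
  simpa [Se, Xe, map_mul] using this

lemma uS_conj (w : Equiv.Perm (Fin N)) (i : Fin N) :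
    uS K N q w * uX K N q i * (uS K N q w)⁻¹ = uX K N q (w i) := by
  apply Units.ext
  rw [Units.val_mul, Units.val_mul]
  have h1 : (↑(uS K N q w) : SmashD K N q) = Se K q w := rfl
  have h2 : (↑(uX K N q i) : SmashD K N q) = Xe K N q i := rfl
  rw [h1, h2, Se_mul_Xe, ← h1]
  exact Units.mul_inv_cancel_right (Xe K N q (w i)) (uS K N q w)

lemma Se_mul_uX_zpow (w : Equiv.Perm (Fin N)) (i : Fin N) (n : ℤ) :
    Se K q w * ((uX K N q i ^ n : (SmashD K N q)ˣ) : SmashD K N q)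
      = ((uX K N q (w i) ^ n : (SmashD K N q)ˣ) : SmashD K N q) * Se K q w := by
  have h1 : (MulAut.conj (uS K N q w)) (uX K N q i ^ n) = uX K N q (w i) ^ n := by
    rw [map_zpow]
    congr 1
    rw [MulAut.conj_apply]
    exact uS_conj K q w i
  have h2 : uS K N q w * (uX K N q i ^ n) * (uS K N q w)⁻¹ = uX K N q (w i) ^ n := by
    rw [← MulAut.conj_apply]; exact h1
  have h3 : uS K N q w * (uX K N q i ^ n) = uX K N q (w i) ^ n * uS K N q w := by
    rw [← h2, inv_mul_cancel_right]
  have := congrArg (Units.val) h3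
  rw [Units.val_mul, Units.val_mul] at this; exact this

lemma Se_mul_Xpow (w : Equiv.Perm (Fin N)) (a : Fin N → ℤ) :
    Se K q w * Xpow K N q a = Xpow K N q (fun j => a (w⁻¹ j)) * Se K q w := by
  induction a using pi_int_induction with
  | h0 =>
    have : (fun j => (0 : Fin N → ℤ) (w⁻¹ j)) = (0 : Fin N → ℤ) := rfl
    rw [this, Xpow_zero, one_mul, mul_one]
  | hadd a b ha hb =>
    have : (fun j => (a + b) (w⁻¹ j)) = (fun j => a (w⁻¹ j)) + (fun j => b (w⁻¹ j)) := rfl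
    rw [Xpow_add, ← mul_assoc, ha, mul_assoc, hb, ← mul_assoc, this, Xpow_add]
  | hsingle j n =>
    have hrel : (fun k => (n • Pi.single j 1 : Fin N → ℤ) (w⁻¹ k))
        = (n • Pi.single (w j) 1 : Fin N → ℤ) := by
      funext k
      simp only [Pi.smul_apply, smul_eq_mul]
      congr 1
      by_cases hk : k = w j
      · subst hk; rw [Equiv.Perm.coe_inv, Equiv.symm_apply_apply, Pi.single_eq_same, Pi.single_eq_same]
      · rw [Pi.single_eq_of_ne hk, Pi.single_eq_of_ne]
        intro hc
        exact hk (by rw [← hc]; simp)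
    rw [hrel, Xpow, Xpow, XpowU_single, XpowU_single]
    exact Se_mul_uX_zpow K q w j n

end
end S12
namespace S12
section
open Finsupp TensorProduct
variable (K : Type) [Field K] (N : ℕ) (q : Kˣ)
variable (S : Type) [AddCommGroup S] [Module K S]
  [DistribMulAction (Equiv.Perm (Fin N)) S] [SMulCommClass (Equiv.Perm (Fin N)) K S]

/-- The `D`-module structure on `MM` via `psi`. -/
local instance modD : Module (SmashD K N q) (MM N S) :=
  Module.compHom _ (psi K N q S).toRingHom

variable {N}

lemma smul_def (d : SmashD K N q) (m : MM N S) : d • m = psi K N q S d m := rfl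

lemma algebraMap_smul_eq (c : K) (m : MM N S) :
    (algebraMap K (SmashD K N q) c) • m = c • m := by
  rw [smul_def, AlgHom.commutes]
  exact Module.algebraMap_end_apply K K _ c m

variable (N)

/-- The bilinear evaluation map. -/
def evB : SmashD K N q →ₗ[K] S →ₗ[K] MM N S :=
  LinearMap.mk₂ K (fun d s => psi K N q S d (single 0 s))
    (fun d d' s => by rw [map_add]; rfl)
    (fun c d s => by rw [map_smul]; rfl)
    (fun d s s' => by rw [single_add, map_add])
    (fun c d s => by rw [← smul_single, map_smul])

/-- The `K`-linear evaluation map `D ⊗ S → MM`. -/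
def evK : (SmashD K N q ⊗[K] S) →ₗ[K] MM N S := TensorProduct.lift (evB K N q S)

lemma evK_tmul (d : SmashD K N q) (s : S) :
    evK K N q S (d ⊗ₜ[K] s) = psi K N q S d (single 0 s) := rfl

lemma evK_smul (d : SmashD K N q) (t : SmashD K N q ⊗[K] S) :
    evK K N q S (d • t) = d • evK K N q S t := by
  induction t with
  | zero => rw [smul_zero, map_zero, smul_zero]
  | tmul d' s =>
    rw [TensorProduct.smul_tmul', evK_tmul, evK_tmul, smul_eq_mul, map_mul]
    rfl
  | add x y hx hy => rw [smul_add, map_add, hx, hy, map_add, smul_add]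

/-- The `D`-linear evaluation map. -/
def evD : (SmashD K N q ⊗[K] S) →ₗ[SmashD K N q] MM N S where
  toFun := evK K N q S
  map_add' := map_add _
  map_smul' := evK_smul K N q S

lemma indRel_le_ker : indRel K N q S ≤ LinearMap.ker (evD K N q S) := by
  rw [indRel, Submodule.span_le]
  rintro x (⟨⟨d, i, s, rfl⟩ | ⟨d, i, s, rfl⟩⟩ | ⟨d, w, s, rfl⟩) <;>
    simp only [SetLike.mem_coe, LinearMap.mem_ker, map_sub, evD, LinearMap.coe_mk,
      AddHom.coe_mk, evK_tmul, map_mul, Module.End.mul_apply, sub_eq_zero]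
  · rw [psi_Ye]
    norm_num
  · rw [psi_YeInv]
    norm_num
  · rw [psi_Se]
    congr 1

/-- The quotient `D ⊗_Γ (1^N ⊠ S)`. -/
abbrev QQ := @HasQuotient.Quotient _ _ (@Submodule.hasQuotient (SmashD K N q) (SmashD K N q ⊗[K] S) _ _ _)
  (indRel K N q S)

/-- The induced map on the quotient. -/
def evQ : QQ K N q S →ₗ[SmashD K N q] MM N S := by
  have f := @Submodule.liftQ (SmashD K N q) (SmashD K N q ⊗[K] S) _ _ _ (indRel K N q S)
    (SmashD K N q) (MM N S) _ _ _ (RingHom.id _) (evD K N q S) (indRel_le_ker K N q S)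
  exact f

lemma evQ_mk (t : SmashD K N q ⊗[K] S) :
    evQ K N q S (Submodule.Quotient.mk t) = evK K N q S t := rfl

/-- The candidate inverse, sending `single a s` to the class of `X^a ⊗ s`. -/
def iotaF : MM N S →+ QQ K N q S :=
  Finsupp.liftAddHom (fun a =>
    { toFun := fun s => Submodule.Quotient.mk (Xpow K N q a ⊗ₜ[K] s)
      map_zero' := by rw [TensorProduct.tmul_zero]; rfl
      map_add' := fun s t => by rw [TensorProduct.tmul_add]; rfl })

lemma iotaF_single (a : Fin N → ℤ) (s : S) :
    iotaF K N q S (single a s) = Submodule.Quotient.mk (Xpow K N q a ⊗ₜ[K] s) := by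
  rw [iotaF, Finsupp.liftAddHom_apply_single]
  rfl

/-- Congruence lemmas in the quotient. -/
lemma mk_mul_Ye (d : SmashD K N q) (i : Fin N) (s : S) :
    (Submodule.Quotient.mk ((d * Ye K q i) ⊗ₜ[K] s) : QQ K N q S)
      = Submodule.Quotient.mk (d ⊗ₜ[K] s) := by
  rw [Submodule.Quotient.eq]
  exact Submodule.subset_span (Or.inl (Or.inl ⟨d, i, s, rfl⟩))

lemma mk_mul_YeInv (d : SmashD K N q) (i : Fin N) (s : S) :
    (Submodule.Quotient.mk ((d * YeInv K q i) ⊗ₜ[K] s) : QQ K N q S)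
      = Submodule.Quotient.mk (d ⊗ₜ[K] s) := by
  rw [Submodule.Quotient.eq]
  exact Submodule.subset_span (Or.inl (Or.inr ⟨d, i, s, rfl⟩))

lemma mk_mul_Se (d : SmashD K N q) (w : Equiv.Perm (Fin N)) (s : S) :
    (Submodule.Quotient.mk ((d * Se K q w) ⊗ₜ[K] s) : QQ K N q S)
      = Submodule.Quotient.mk (d ⊗ₜ[K] (w • s)) := by
  rw [Submodule.Quotient.eq]
  exact Submodule.subset_span (Or.inr ⟨d, w, s, rfl⟩)

lemma mk_smul_tmul (d d' : SmashD K N q) (s : S) :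
    d • (Submodule.Quotient.mk (d' ⊗ₜ[K] s) : QQ K N q S)
      = Submodule.Quotient.mk ((d * d') ⊗ₜ[K] s) := by
  rw [← Submodule.Quotient.mk_smul, TensorProduct.smul_tmul', smul_eq_mul]

/-- Reduction of equivariance to basis vectors. -/
lemma iota_smul_ext (d : SmashD K N q)
    (h : ∀ a s, iotaF K N q S (d • single a s) = d • iotaF K N q S (single a s)) :
    ∀ m, iotaF K N q S (d • m) = d • iotaF K N q S m := by
  intro m
  induction m using Finsupp.induction with
  | zero => rw [smul_zero, map_zero, smul_zero]
  | single_add a b f _ _ ih => rw [smul_add, map_add, h, map_add, smul_add, ih]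

lemma top_gen :
    Algebra.adjoin K (Set.range fun g : SGen N =>
      RingQuot.mkAlgHom K (SRel K N q) (sg K g)) = ⊤ := by
  have h1 : (Set.range fun g : SGen N => RingQuot.mkAlgHom K (SRel K N q) (sg K g))
      = RingQuot.mkAlgHom K (SRel K N q) '' Set.range (FreeAlgebra.ι K) := by
    rw [← Set.range_comp]
    rfl
  rw [h1, ← AlgHom.map_adjoin, FreeAlgebra.adjoin_range_ι, Algebra.map_top]
  rw [AlgHom.range_eq_top]
  exact RingQuot.mkAlgHom_surjective K _

lemma iota_equivariant (d : SmashD K N q) (m : MM N S) :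
    iotaF K N q S (d • m) = d • iotaF K N q S m := by
  have hd : d ∈ Algebra.adjoin K (Set.range fun g : SGen N =>
      RingQuot.mkAlgHom K (SRel K N q) (sg K g)) := by
    rw [top_gen]; trivial
  revert m
  induction hd using Algebra.adjoin_induction with
  | mem x hx =>
    obtain ⟨g, rfl⟩ := hx
    cases g with
    | X i =>
      refine iota_smul_ext K N q S _ fun a s => ?_
      dsimp only
      rw [show (RingQuot.mkAlgHom K (SRel K N q)) (sg K (SGen.X i)) = Xe K N q i from rfl]
      rw [smul_def, psi_Xe, iotaF_single, iotaF_single, mk_smul_tmul]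
      congr 2
      rw [show a + Pi.single i 1 = Pi.single i 1 + a from add_comm _ _, Xpow_add,
        Xpow_single_one]
    | Xinv i =>
      refine iota_smul_ext K N q S _ fun a s => ?_
      dsimp only
      rw [show (RingQuot.mkAlgHom K (SRel K N q)) (sg K (SGen.Xinv i)) = XeI K N q i from rfl]
      rw [smul_def, psi_XeI, iotaF_single, iotaF_single, mk_smul_tmul]
      congr 2
      rw [show a - Pi.single i 1 = -Pi.single i 1 + a from by ring, Xpow_add,
        Xpow_single_neg_one]
    | Y i =>
      refine iota_smul_ext K N q S _ fun a s => ?_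
      dsimp only
      rw [show (RingQuot.mkAlgHom K (SRel K N q)) (sg K (SGen.Y i)) = Ye K q i from rfl]
      rw [smul_def, psi_Ye, smul_single, iotaF_single, iotaF_single, mk_smul_tmul,
        Ye_mul_Xpow, TensorProduct.smul_tmul, mk_mul_Ye]
    | Yinv i =>
      refine iota_smul_ext K N q S _ fun a s => ?_
      dsimp only
      rw [show (RingQuot.mkAlgHom K (SRel K N q)) (sg K (SGen.Yinv i)) = YeInv K q i from rfl]
      rw [smul_def, psi_YeInv, smul_single, iotaF_single, iotaF_single, mk_smul_tmul,
        YeInv_mul_Xpow, TensorProduct.smul_tmul, mk_mul_YeInv]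
    | S w =>
      refine iota_smul_ext K N q S _ fun a s => ?_
      dsimp only
      rw [show (RingQuot.mkAlgHom K (SRel K N q)) (sg K (SGen.S w)) = Se K q w from rfl]
      rw [smul_def, psi_Se, iotaF_single, iotaF_single, mk_smul_tmul,
        Se_mul_Xpow, mk_mul_Se]
  | algebraMap r =>
    refine iota_smul_ext K N q S _ fun a s => ?_
    rw [algebraMap_smul_eq, smul_single, iotaF_single, iotaF_single, mk_smul_tmul,
      ← Algebra.smul_def, TensorProduct.smul_tmul]
  | add x y hx hy hx' hy' =>
    intro m
    rw [add_smul, map_add, hx', hy', add_smul]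
  | mul x y hx hy hx' hy' =>
    intro m
    rw [mul_smul, hx', hy', mul_smul]

end
end S12
namespace S12
section
open Finsupp TensorProduct
variable (K : Type) [Field K] (N : ℕ) (q : Kˣ)
variable (S : Type) [AddCommGroup S] [Module K S]
  [DistribMulAction (Equiv.Perm (Fin N)) S] [SMulCommClass (Equiv.Perm (Fin N)) K S]

attribute [local instance] modD

lemma evQ_iotaF (m : MM N S) : evQ K N q S (iotaF K N q S m) = m := by
  induction m using Finsupp.induction with
  | zero => rw [map_zero, map_zero]
  | single_add a b f _ _ ih =>
    rw [map_add, map_add, ih, iotaF_single, evQ_mk, evK_tmul, psi_Xpow, zero_add]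

lemma iotaF_evQ (x : QQ K N q S) : iotaF K N q S (evQ K N q S x) = x := by
  obtain ⟨t, rfl⟩ := Submodule.Quotient.mk_surjective _ x
  rw [evQ_mk]
  induction t with
  | zero => rw [map_zero, map_zero]; rfl
  | tmul d s =>
    rw [evK_tmul, ← smul_def, iota_equivariant, iotaF_single, Xpow_zero,
      mk_smul_tmul, mul_one]
  | add t t' ht ht' =>
    rw [map_add, map_add, ht, ht']
    rfl

/-- `D ⊗_Γ (1^N ⊠ S) ≃ MM` as `D`-modules. -/
def eqv : QQ K N q S ≃ₗ[SmashD K N q] MM N S :=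
  LinearEquiv.ofBijective (evQ K N q S)
    ⟨fun x y h => by
        have := congrArg (iotaF K N q S) h
        rwa [iotaF_evQ, iotaF_evQ] at this,
      fun m => ⟨iotaF K N q S m, evQ_iotaF K N q S m⟩⟩

variable {K q}

lemma q_zpow_ne_one (hq : ∀ m : ℕ, m ≠ 0 → (q : K) ^ m ≠ 1) :
    ∀ n : ℤ, n ≠ 0 → q ^ n ≠ 1 := by
  have hpos : ∀ n : ℤ, 0 < n → q ^ n ≠ 1 := by
    intro n hn h
    have h1 : q ^ n.toNat = 1 := by
      rw [← zpow_natCast, Int.toNat_of_nonneg hn.le]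
      exact h
    have h2 : (q : K) ^ n.toNat = 1 := by
      have := congrArg Units.val h1
      simpa using this
    exact hq n.toNat (by omega) h2
  intro n hn h
  rcases lt_or_gt_of_ne hn with hlt | hgt
  · refine hpos (-n) (by omega) ?_
    rw [zpow_neg, h, inv_one]
  · exact hpos n hgt h

lemma q_zpow_inj (hq : ∀ m : ℕ, m ≠ 0 → (q : K) ^ m ≠ 1) {x y : ℤ}
    (h : q ^ x = q ^ y) : x = y := by
  by_contra hne
  refine q_zpow_ne_one hq (x - y) (sub_ne_zero.mpr hne) ?_
  rw [zpow_sub, h, mul_inv_cancel]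

variable (K q) {N}

lemma evalY_single (i : Fin N) (b : Fin N → ℤ) (s : S) (a : Fin N → ℤ) :
    (Ye K q i • single b s : MM N S) a = ((q ^ (a i) : Kˣ) : K) • (single b s : MM N S) a := by
  rw [smul_def, psi_Ye, Finsupp.smul_apply]
  by_cases hab : a = b
  · subst hab; rfl
  · rw [Finsupp.single_eq_of_ne hab, smul_zero, smul_zero]

lemma evalY (i : Fin N) (m : MM N S) (a : Fin N → ℤ) :
    (Ye K q i • m) a = ((q ^ (a i) : Kˣ) : K) • m a := by
  induction m using Finsupp.induction with
  | zero => rw [smul_zero]; simp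
  | single_add b c f _ _ ih =>
    rw [smul_add, Finsupp.add_apply, evalY_single, ih, Finsupp.add_apply, smul_add]

lemma step_down (hq : ∀ m : ℕ, m ≠ 0 → (q : K) ^ m ≠ 1)
    (p : Submodule (SmashD K N q) (MM N S)) :
    ∀ (n : ℕ) (m : MM N S), m.support.card ≤ n → m ∈ p → m ≠ 0 →
      ∃ a s, s ≠ 0 ∧ (single a s : MM N S) ∈ p := by
  intro n
  induction n with
  | zero =>
    intro m hc hm hm0
    exact absurd (Finsupp.support_eq_empty.mp (Finset.card_eq_zero.mp (le_antisymm hc bot_le))) hm0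
  | succ n ih =>
    intro m hc hm hm0
    by_cases h1 : m.support.card ≤ n
    · exact ih m h1 hm hm0
    · by_cases h2 : m.support.card = 1
      · obtain ⟨a, ha, hma⟩ := Finsupp.card_support_eq_one.mp h2
        exact ⟨a, m a, ha, by rw [← hma]; exact hm⟩
      · have hne : m.support.Nonempty := Finsupp.support_nonempty_iff.mpr hm0
        have h3 : 1 < m.support.card := by
          have := Finset.card_pos.mpr hne
          omega
        obtain ⟨a, ha, b, hb, hab⟩ := Finset.one_lt_card.mp h3
        have hex : ∃ i, a i ≠ b i := by
          by_contra hno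
          push_neg at hno
          exact hab (funext hno)
        obtain ⟨i, hi⟩ := hex
        set c : K := ((q ^ (b i) : Kˣ) : K) with hc_def
        set m' := Ye K q i • m - (algebraMap K (SmashD K N q) c) • m with hm'
        have hm'p : m' ∈ p := p.sub_mem (p.smul_mem _ hm) (p.smul_mem _ hm)
        have hval : ∀ x, m' x = (((q ^ (x i) : Kˣ) : K) - c) • m x := by
          intro x
          rw [hm', Finsupp.sub_apply, evalY, algebraMap_smul_eq, Finsupp.smul_apply, sub_smul]
        have hma' : m' a ≠ 0 := by
          rw [hval]
          refine smul_ne_zero ?_ (Finsupp.mem_support_iff.mp ha)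
          intro hzero
          have : ((q ^ (a i) : Kˣ) : K) = c := sub_eq_zero.mp hzero
          have huv : (q ^ (a i) : Kˣ) = q ^ (b i) := Units.ext this
          exact hi (q_zpow_inj hq huv)
        have hm'0 : m' ≠ 0 := fun h => hma' (by rw [h]; rfl)
        have hsub : m'.support ⊆ m.support.erase b := by
          intro x hx
          have hx0 : m' x ≠ 0 := Finsupp.mem_support_iff.mp hx
          rw [Finset.mem_erase]
          refine ⟨?_, ?_⟩
          · intro hxb
            subst hxb
            refine hx0 ?_
            rw [hval, sub_self, zero_smul]
          · rw [Finsupp.mem_support_iff]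
            intro hmx
            exact hx0 (by rw [hval, hmx, smul_zero])
        have hcard' : m'.support.card ≤ n := by
          have h4 := Finset.card_le_card hsub
          rw [Finset.card_erase_of_mem hb] at h4
          omega
        exact ih m' hcard' hm'p hm'0

lemma shift_mem (p : Submodule (SmashD K N q) (MM N S)) (u v : Fin N → ℤ) (t : S)
    (h : (single u t : MM N S) ∈ p) : (single v t : MM N S) ∈ p := by
  have h2 := p.smul_mem (Xpow K N q (v - u)) h
  rw [smul_def, psi_Xpow] at h2
  have he : u + (v - u) = v := by abel
  rwa [he] at h2

lemma p_eq_top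
    (hSsimple : ∀ p : Submodule K S,
      (∀ (w : Equiv.Perm (Fin N)) (x : S), x ∈ p → w • x ∈ p) → p = ⊥ ∨ p = ⊤)
    (p : Submodule (SmashD K N q) (MM N S)) (a : Fin N → ℤ) (s : S) (hs : s ≠ 0)
    (hsp : (single a s : MM N S) ∈ p) : p = ⊤ := by
  set S0 : Submodule K S :=
    { carrier := {t | (single 0 t : MM N S) ∈ p}
      add_mem' := fun {t} {t'} ht ht' => by
        show (single 0 (t + t') : MM N S) ∈ p
        rw [single_add]
        exact p.add_mem ht ht'
      zero_mem' := by
        show (single 0 (0 : S) : MM N S) ∈ p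
        rw [single_zero]
        exact p.zero_mem
      smul_mem' := fun c t ht => by
        show (single 0 (c • t) : MM N S) ∈ p
        rw [← smul_single, ← algebraMap_smul_eq K q S c]
        exact p.smul_mem _ ht } with hS0_def
  have hstab : ∀ (w : Equiv.Perm (Fin N)) (t : S), t ∈ S0 → w • t ∈ S0 := by
    intro w t ht
    have h2 := p.smul_mem (Se K q w) ht
    rw [smul_def, psi_Se] at h2
    exact h2
  have hS0top : S0 = ⊤ := by
    rcases hSsimple S0 (fun w x hx => hstab w x hx) with hbot | htop
    · exfalso
      have : s ∈ S0 := shift_mem K q S p a 0 s hsp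
      rw [hbot] at this
      exact hs (by simpa using this)
    · exact htop
  rw [Submodule.eq_top_iff']
  intro m
  induction m using Finsupp.induction with
  | zero => exact p.zero_mem
  | single_add b t f _ _ ih =>
    refine p.add_mem ?_ ih
    have ht : t ∈ S0 := by rw [hS0top]; trivial
    exact shift_mem K q S p 0 b t ht

lemma MM_simple (hq : ∀ m : ℕ, m ≠ 0 → (q : K) ^ m ≠ 1) (hS0 : Nontrivial S)
    (hSsimple : ∀ p : Submodule K S,
      (∀ (w : Equiv.Perm (Fin N)) (x : S), x ∈ p → w • x ∈ p) → p = ⊥ ∨ p = ⊤) :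
    IsSimpleModule (SmashD K N q) (MM N S) := by
  obtain ⟨s, hs⟩ := exists_ne (0 : S)
  have hsm : (single 0 s : MM N S) ≠ 0 := by
    intro h
    exact hs (by simpa using Finsupp.single_eq_zero.mp h)
  have hbt : (⊥ : Submodule (SmashD K N q) (MM N S)) ≠ ⊤ := by
    intro h
    have : (single 0 s : MM N S) ∈ (⊥ : Submodule (SmashD K N q) (MM N S)) := by
      rw [h]; trivial
    exact hsm (by simpa using this)
  haveI : Nontrivial (Submodule (SmashD K N q) (MM N S)) := ⟨⟨⊥, ⊤, hbt⟩⟩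
  refine (fun _ : IsSimpleOrder (Submodule (SmashD K N q) (MM N S)) => ⟨⟩) ?_
  constructor
  intro p
  by_cases hp : p = ⊥
  · exact Or.inl hp
  · refine Or.inr ?_
    obtain ⟨m, hm, hm0⟩ := Submodule.ne_bot_iff p |>.mp hp
    obtain ⟨a, t, ht, htp⟩ :=
      step_down K q S hq p m.support.card m le_rfl hm hm0
    exact p_eq_top K q S hSsimple p a t ht htp

lemma main (hq : ∀ m : ℕ, m ≠ 0 → (q : K) ^ m ≠ 1) (hS0 : Nontrivial S)
    (hSsimple : ∀ p : Submodule K S,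
      (∀ (w : Equiv.Perm (Fin N)) (x : S), x ∈ p → w • x ∈ p) → p = ⊥ ∨ p = ⊤) :
    IsSimpleModule (SmashD K N q) (QQ K N q S) := by
  haveI := MM_simple K q S hq hS0 hSsimple
  exact IsSimpleModule.congr (eqv K N q S)

end
end S12

theorem statement12 (K : Type) [Field K] [CharZero K] (N : ℕ) (hN : 1 ≤ N)
    (q : Kˣ) (hq : ∀ m : ℕ, m ≠ 0 → (q : K) ^ m ≠ 1)
    (S : Type) [AddCommGroup S] [Module K S]
    [DistribMulAction (Equiv.Perm (Fin N)) S]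
    [SMulCommClass (Equiv.Perm (Fin N)) K S]
    (hS0 : Nontrivial S)
    (hSsimple : ∀ p : Submodule K S,
      (∀ (w : Equiv.Perm (Fin N)) (x : S), x ∈ p → w • x ∈ p) → p = ⊥ ∨ p = ⊤) :
    IsSimpleModule (SmashD K N q)
      (@HasQuotient.Quotient _ _ (@Submodule.hasQuotient (SmashD K N q) (SmashD K N q ⊗[K] S) _ _ _)
        (indRel K N q S)) := by
  exact S12.main K q S hq hS0 hSsimple

end
end
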